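/- arXiv:1011.0019 — 3 statements merged into one kernel-verified Lean document; each statement's English description precedes it below -/
import Mathlib

section
/- Volume packing lemma. Let d, t ≥ 1, let B be a positive integer, let K ⊂ ℝ^d be a convex body contained in some translate of [−B, B]^d, let Ψ = (ψ_1, …, ψ_t) : ℤ^d → ℤ^t be a system of affine-linear forms, and let d_1, …, d_t be positive integers. Then Σ_{n ∈ ℤ^d ∩ K} ∏_{i=1}^t 1_{d_i | ψ_i(n)} = vol(K) · α(d_1, …, d_t) + O(B^{d−1} lcm(d_1, …, d_t)), where the implied constant depends only on d. -/
open MeasureTheory Finset Filter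
open scoped Classical BigOperators ENNReal NNReal Pointwise

noncomputable section

namespace DivisorCorr


/-- Value of the `i`-th affine-linear form (with linear coefficients `A` and
constant terms `b`) at an integer point `n`. -/
def psiZ {d t : ℕ} (A : Fin t → Fin d → ℤ) (b : Fin t → ℤ) (i : Fin t) (n : Fin d → ℤ) : ℤ :=
  ∑ j, A i j * n j + b i

/-- Value of the `i`-th affine-linear form at a real point `x`. -/
def psiR {d t : ℕ} (A : Fin t → Fin d → ℤ) (b : Fin t → ℤ) (i : Fin t) (x : Fin d → ℝ) : ℝ :=
  ∑ j, (A i j : ℝ) * x j + (b i : ℝ)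

/-- Non-degeneracy conditions for a system of affine-linear forms: no form is constant,
no restriction of the system to a single variable is constant, and no two forms are
rational multiples of each other. -/
def IsSystem {d t : ℕ} (A : Fin t → Fin d → ℤ) (b : Fin t → ℤ) : Prop :=
  (∀ i, ∃ j, A i j ≠ 0) ∧ (∀ j, ∃ i, A i j ≠ 0) ∧
    ∀ i j : Fin t, i ≠ j →
      ¬∃ q r : ℤ, q ≠ 0 ∧ r ≠ 0 ∧ (∀ k, q * A i k = r * A j k) ∧ q * b i = r * b j

/-- All linear coefficients are bounded in absolute value by `L`. -/
def CoeffBound {d t : ℕ} (A : Fin t → Fin d → ℤ) (L : ℕ) : Prop :=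
  ∀ i j, |A i j| ≤ (L : ℤ)

/-- Any two distinct linear parts are linearly independent (over ℚ, equivalently over ℤ). -/
def PairwiseIndep {d t : ℕ} (A : Fin t → Fin d → ℤ) : Prop :=
  ∀ i j : Fin t, i ≠ j → ∀ q r : ℤ, (∀ k, q * A i k + r * A j k = 0) → q = 0 ∧ r = 0

/-- Local divisor density `α(d₁,…,d_t)`. -/
def alphaD {d t : ℕ} (A : Fin t → Fin d → ℤ) (b : Fin t → ℤ) (D : Fin t → ℕ) : ℝ :=
  (((Fintype.piFinset fun _ : Fin d => Finset.range ((univ : Finset (Fin t)).lcm D)).filter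
      fun n => ∀ i, (D i : ℤ) ∣ psiZ A b i fun j => (n j : ℤ)).card : ℝ) /
    ((((univ : Finset (Fin t)).lcm D : ℕ) : ℝ)) ^ d

/-- Local factor `β_p`. -/
def betaP {d t : ℕ} (A : Fin t → Fin d → ℤ) (b : Fin t → ℤ) (p : ℕ) : ℝ :=
  (1 - (p : ℝ)⁻¹) ^ t * ∑' a : Fin t → ℕ, alphaD A b fun i => p ^ a i

/-- The divisor function of an integer. -/
def tauZ (n : ℤ) : ℕ := n.natAbs.divisors.card

/-- The normalised divisor function `τ̃(n) = (log N)⁻¹ Σ_{d ∣ n} 1`. -/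
def tauTilde (N : ℕ) (n : ℤ) : ℝ := (Real.log N)⁻¹ * (tauZ n : ℝ)

/-- The truncated normalised divisor function
`τ̃_γ(n) = (γ log N)⁻¹ Σ_{d ∣ n, d ≤ N^γ} 1`. -/
def tauTildeG (N : ℕ) (γ : ℝ) (n : ℤ) : ℝ :=
  (γ * Real.log N)⁻¹ * (((n.natAbs.divisors.filter (fun e : ℕ => (e : ℝ) ≤ (N : ℝ) ^ γ)).card : ℕ) : ℝ)

/-- The integer points of `K` (assumed to lie in `[-N,N]^d`). -/
def pts (d N : ℕ) (K : Set (Fin d → ℝ)) : Finset (Fin d → ℤ) :=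
  (Fintype.piFinset fun _ : Fin d => Finset.Icc (-(N : ℤ)) (N : ℤ)).filter
    fun n => (fun j => (n j : ℝ)) ∈ K

/-- The integer points of `K` (assumed to lie in the box `∏_j [lo j, hi j]`). -/
def ptsBox {d : ℕ} (lo hi : Fin d → ℤ) (K : Set (Fin d → ℝ)) : Finset (Fin d → ℤ) :=
  (Fintype.piFinset fun j : Fin d => Finset.Icc (lo j) (hi j)).filter
    fun n => (fun j => (n j : ℝ)) ∈ K

/-- `K ⊆ [-N,N]^d`. -/
def InBox (d N : ℕ) (K : Set (Fin d → ℝ)) : Prop :=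
  ∀ x ∈ K, ∀ j, x j ∈ Set.Icc (-(N : ℝ)) (N : ℝ)

/-- `Ψ(K) ⊆ [1,N]^t`. -/
def MapsIn {d t : ℕ} (A : Fin t → Fin d → ℤ) (b : Fin t → ℤ) (N : ℕ)
    (K : Set (Fin d → ℝ)) : Prop :=
  ∀ x ∈ K, ∀ i, psiR A b i x ∈ Set.Icc (1 : ℝ) (N : ℝ)

/-- Two linear parts are linearly dependent modulo `p`. -/
def AffRelMod {d : ℕ} (p : ℕ) (u v : Fin d → ℤ) : Prop :=
  ∃ q r : ℤ, (¬(p : ℤ) ∣ q ∨ ¬(p : ℤ) ∣ r) ∧ ∀ k, (p : ℤ) ∣ (q * u k + r * v k)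

/-- `p` is an exceptional prime for the system with linear coefficients `A`. -/
def Exceptional {d t : ℕ} (A : Fin t → Fin d → ℤ) (p : ℕ) : Prop :=
  ∃ i j : Fin t, i ≠ j ∧ AffRelMod p (A i) (A j)

/-- `S₁`: integers divisible by a proper prime power `p^a > (log N)^{C₁}`. -/
def S1set (N : ℕ) (C₁ : ℝ) : Set ℤ :=
  {m | ∃ p a : ℕ, p.Prime ∧ 2 ≤ a ∧ Real.log N ^ C₁ < (p : ℝ) ^ a ∧ (p : ℤ) ^ a ∣ m}

/-- The `X`-smooth part `∏_{p^a ∥ n, p ≤ X} p^a` of `n`. -/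
def smoothPart (n : ℕ) (X : ℝ) : ℕ :=
  ∏ p ∈ (n.primeFactors.filter (fun p : ℕ => (p : ℝ) ≤ X) : Finset ℕ), p ^ n.factorization p

/-- `S₂`: positive "smooth" integers `m` with
`∏_{p^a ∥ m, p ≤ N^{1/(log log N)³}} p^a ≥ N^{γ / log log N}`. -/
def S2set (N : ℕ) (γ : ℝ) : Set ℤ :=
  {m | 0 < m ∧ (N : ℝ) ^ (γ / Real.log (Real.log N)) ≤
      (smoothPart m.natAbs ((N : ℝ) ^ ((Real.log (Real.log N)) ^ 3)⁻¹) : ℝ)}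

/-- `m₀(i,s) = ⌈γ s (i + 3 - log₂ s)/100⌉`. -/
def mSmall (γ : ℝ) (s i : ℕ) : ℕ := ⌈γ * s * ((i : ℝ) + 3 - Real.logb 2 s) / 100⌉₊

/-- Membership in `U(i,s)`: products of `m₀(i,s)` distinct primes from
`[N^{1/2^{i+1}}, N^{1/2^i}]`. -/
def inU (N : ℕ) (γ : ℝ) (s i : ℕ) (u : ℕ) : Prop :=
  Squarefree u ∧ u.primeFactors.card = mSmall γ s i ∧
    ∀ p ∈ u.primeFactors,
      (N : ℝ) ^ (((2 : ℝ) ^ (i + 1))⁻¹) ≤ (p : ℝ) ∧ (p : ℝ) ≤ (N : ℝ) ^ (((2 : ℝ) ^ i)⁻¹)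

/-- `X(i,s)`: positive integers `n ≤ N` divisible by at least `m₀(i,s)` distinct primes
from `[N^{1/2^{i+1}}, N^{1/2^i}]`. -/
def clusterSet (N : ℕ) (γ : ℝ) (s i : ℕ) : Finset ℕ :=
  (Finset.Icc 1 N).filter fun n =>
    mSmall γ s i ≤ (n.primeFactors.filter fun p =>
      (N : ℝ) ^ (((2 : ℝ) ^ (i + 1))⁻¹) ≤ (p : ℝ) ∧ (p : ℝ) ≤ (N : ℝ) ^ (((2 : ℝ) ^ i)⁻¹)).card

/-- The triple sum `Σ_{s=2g+1}^{(log log N)³} Σ_{log₂ s - 2 ≤ i ≤ 6 log log log N}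
Σ_{u ∈ U(i,s)} 2^s 1_{u ∣ n} tg(n)` appearing in the majorants. -/
def nuTail (N : ℕ) (γ : ℝ) (g : ℕ) (tg : ℤ → ℝ) (n : ℤ) : ℝ :=
  ∑ s ∈ Finset.Icc (2 * g + 1) ⌊(Real.log (Real.log N)) ^ 3⌋₊,
    ∑ i ∈ Finset.range (⌊6 * Real.log (Real.log (Real.log N))⌋₊ + 1),
      if Real.logb 2 (s : ℝ) - 2 ≤ (i : ℝ) then
        (2 : ℝ) ^ s * (((n.natAbs.divisors.filter (inU N γ s i)).card : ℕ) : ℝ) * tg n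
      else 0

/-- The majorant `ν₀` for the normalised divisor function, with `γ = 1/g`. -/
def nu0 (N g : ℕ) (C₁ : ℝ) (n : ℤ) : ℝ :=
  (2 : ℝ) ^ (2 * g) * tauTildeG N (g : ℝ)⁻¹ n +
    nuTail N (g : ℝ)⁻¹ g (tauTildeG N (g : ℝ)⁻¹) n +
    if n ∈ S1set N C₁ ∪ S2set N (g : ℝ)⁻¹ then tauTilde N n else 0

/-- `w(N) = (1/2) log log N`. -/
def wN (N : ℕ) : ℝ := Real.log (Real.log N) / 2

/-- Primes `p < w(N)`. -/
def smallPrimes (N : ℕ) : Finset ℕ :=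
  (Finset.range (⌈wN N⌉₊ + 1)).filter fun p : ℕ => p.Prime ∧ (p : ℝ) < wN N

/-- Primes `p ≤ w(N)`. -/
def smallPrimesLe (N : ℕ) : Finset ℕ :=
  (Finset.range (⌈wN N⌉₊ + 1)).filter fun p : ℕ => p.Prime ∧ (p : ℝ) ≤ wN N

/-- `W = ∏_{p < w(N)} p`. -/
def Wp (N : ℕ) : ℕ := ∏ p ∈ smallPrimes N, p

/-- `W̃ = ∏_{p ≤ w(N)} p^{⌊C₁ log_p log N⌋}`. -/
def Wt (N : ℕ) (C₁ : ℝ) : ℕ :=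
  ∏ p ∈ smallPrimesLe N, p ^ ⌊C₁ * (Real.log (Real.log N) / Real.log p)⌋₊

/-- `ϖ(n)`: the `w(N)`-smooth part of `n`. -/
def varpi (N : ℕ) (n : ℕ) : ℕ :=
  ∏ p ∈ (n.primeFactors.filter (fun p : ℕ => (p : ℝ) ≤ wN N) : Finset ℕ), p ^ n.factorization p

/-- The `W`-tricked normalised divisor function
`τ̃'(n) = (W/φ(W)) (log N)⁻¹ Σ_{d ∣ n, (d,W)=1} 1`. -/
def tauW (N : ℕ) (n : ℤ) : ℝ :=
  (Wp N : ℝ) / ((Wp N).totient : ℝ) * (Real.log N)⁻¹ *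
    (((n.natAbs.divisors.filter (fun e => Nat.Coprime e (Wp N))).card : ℕ) : ℝ)

/-- The truncated `W`-tricked normalised divisor function
`τ̃'_γ(n) = (W/φ(W)) (γ log N)⁻¹ Σ_{d ∣ n, d ≤ N^γ, (d,W)=1} 1`. -/
def tauWG (N : ℕ) (γ : ℝ) (n : ℤ) : ℝ :=
  (Wp N : ℝ) / ((Wp N).totient : ℝ) * (γ * Real.log N)⁻¹ *
    (((n.natAbs.divisors.filter (fun e : ℕ =>
        (e : ℝ) ≤ (N : ℝ) ^ γ ∧ Nat.Coprime e (Wp N))).card : ℕ) : ℝ)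

/-- The truncated `W`-tricked majorant `ν₀'`, with `γ = 1/g`. -/
def nu0' (N g : ℕ) (n : ℤ) : ℝ :=
  (2 : ℝ) ^ (2 * g) * tauWG N (g : ℝ)⁻¹ n + nuTail N (g : ℝ)⁻¹ g (tauWG N (g : ℝ)⁻¹) n



/-- Integer points of a set in `ℝ^d`. -/
def iptsP {d : ℕ} (K : Set (Fin d → ℝ)) : Set (Fin d → ℤ) := {n | (fun j => (n j : ℝ)) ∈ K}

def icnt {d : ℕ} (K : Set (Fin d → ℝ)) : ℕ := (iptsP K).ncard

def boxL {d : ℕ} (c : Fin d → ℝ) (R : ℝ) : Finset (Fin d → ℤ) :=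
  Fintype.piFinset fun j => Finset.Icc ⌈c j - R⌉ ⌊c j + R⌋

lemma ipts_subset_boxL {d : ℕ} {K : Set (Fin d → ℝ)} {c : Fin d → ℝ} {R : ℝ}
    (hbox : ∀ x ∈ K, ∀ j, |x j - c j| ≤ R) : iptsP K ⊆ ↑(boxL c R) := by
  intro n hn
  have h := hbox _ hn
  simp only [boxL, Finset.coe_sort_coe, Finset.mem_coe, Fintype.mem_piFinset, Finset.mem_Icc]
  intro j
  have h1 := abs_le.1 (h j)
  constructor
  · exact Int.ceil_le.2 (by linarith [h1.2])
  · exact Int.le_floor.2 (by linarith [h1.1])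

lemma icnt_eq_card {d : ℕ} {K : Set (Fin d → ℝ)} {F : Finset (Fin d → ℤ)}
    (h : iptsP K ⊆ ↑F) :
    icnt K = (F.filter fun n => (fun j => (n j : ℝ)) ∈ K).card := by
  rw [icnt, ← Set.ncard_coe_finset]
  congr 1
  ext n
  simp only [iptsP, Set.mem_setOf_eq, Finset.coe_filter, Finset.mem_coe]
  constructor
  · intro hn; exact ⟨by simpa using h hn, hn⟩
  · exact fun hn => hn.2

lemma convex_Ioo_subset {I : Set ℝ} (hc : Convex ℝ I) (hne : I.Nonempty)
    (hbb : BddBelow I) (hba : BddAbove I) : Set.Ioo (sInf I) (sSup I) ⊆ I := by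
  intro x hx
  obtain ⟨y, hy, hyx⟩ := exists_lt_of_csInf_lt hne hx.1
  obtain ⟨z, hz, hxz⟩ := exists_lt_of_lt_csSup hne hx.2
  exact hc.ordConnected.out hy hz ⟨le_of_lt hyx, le_of_lt hxz⟩

lemma vol_convex_interval {I : Set ℝ} (hc : Convex ℝ I) (hne : I.Nonempty)
    (hbb : BddBelow I) (hba : BddAbove I) :
    volume I = ENNReal.ofReal (sSup I - sInf I) := by
  have h1 : Set.Ioo (sInf I) (sSup I) ⊆ I := convex_Ioo_subset hc hne hbb hba
  have h2 : I ⊆ Set.Icc (sInf I) (sSup I) := fun x hx => ⟨csInf_le hbb hx, le_csSup hba hx⟩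
  refine le_antisymm ?_ ?_
  · calc volume I ≤ volume (Set.Icc (sInf I) (sSup I)) := measure_mono h2
      _ = ENNReal.ofReal (sSup I - sInf I) := Real.volume_Icc
  · calc ENNReal.ofReal (sSup I - sInf I) = volume (Set.Ioo (sInf I) (sSup I)) := Real.volume_Ioo.symm
      _ ≤ volume I := measure_mono h1

/-- 1-dimensional lattice counting: for a convex bounded `I ⊆ ℝ`,
`#(ℤ ∩ I)` differs from `vol I` by at most 1. -/
lemma count_interval {I : Set ℝ} (hc : Convex ℝ I) {p q : ℝ} (hsub : I ⊆ Set.Icc p q) :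
    |((Set.ncard {y : ℤ | (y : ℝ) ∈ I}) : ℝ) - (volume I).toReal| ≤ 1 := by
  rcases Set.eq_empty_or_nonempty I with hI | hne
  · subst hI; simp
  have hbb : BddBelow I := ⟨p, fun x hx => (hsub hx).1⟩
  have hba : BddAbove I := ⟨q, fun x hx => (hsub hx).2⟩
  set u := sInf I with hu
  set v := sSup I with hv
  have huv : u ≤ v := csInf_le_csSup hne hbb hba
  have hvol : (volume I).toReal = v - u := by
    rw [vol_convex_interval hc hne hbb hba, ENNReal.toReal_ofReal (by linarith)]
  have hIoo : Set.Ioo u v ⊆ I := convex_Ioo_subset hc hne hbb hba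
  have hIcc : I ⊆ Set.Icc u v := fun x hx => ⟨csInf_le hbb hx, le_csSup hba hx⟩
  set S := {y : ℤ | (y : ℝ) ∈ I}
  have hSsub : S ⊆ ↑(Finset.Icc ⌈u⌉ ⌊v⌋) := by
    intro y hy
    have := hIcc hy
    simp only [Finset.coe_Icc, Set.mem_Icc]
    exact ⟨Int.ceil_le.2 this.1, Int.le_floor.2 this.2⟩
  have hSsup : ↑(Finset.Icc (⌊u⌋ + 1) (⌈v⌉ - 1)) ⊆ S := by
    intro y hy
    simp only [Finset.coe_Icc, Set.mem_Icc] at hy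
    refine hIoo ⟨?_, ?_⟩
    · exact_mod_cast Int.floor_lt.1 (by omega)
    · exact_mod_cast Int.lt_ceil.1 (by omega)
  have hfin : S.Finite := Set.Finite.subset (Finset.finite_toSet _) hSsub
  have hub : (S.ncard : ℝ) ≤ v - u + 1 := by
    have h1 : S.ncard ≤ (Finset.Icc ⌈u⌉ ⌊v⌋).card := by
      rw [← Set.ncard_coe_finset]
      exact Set.ncard_le_ncard hSsub (Finset.finite_toSet _)
    have h2 : ((Finset.Icc ⌈u⌉ ⌊v⌋).card : ℝ) ≤ v - u + 1 := by
      rw [Int.card_Icc]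
      rcases le_or_gt ⌈u⌉ ⌊v⌋ with h | h
      · have hnn : (0:ℤ) ≤ ⌊v⌋ + 1 - ⌈u⌉ := by omega
        have hcast : ((⌊v⌋ + 1 - ⌈u⌉).toNat : ℝ) = ((⌊v⌋ : ℝ) + 1 - ⌈u⌉) := by
          rw [show (((⌊v⌋ + 1 - ⌈u⌉).toNat : ℕ) : ℝ) = (((⌊v⌋ + 1 - ⌈u⌉).toNat : ℤ) : ℝ) by push_cast; ring,
            Int.toNat_of_nonneg hnn]
          push_cast; ring
        rw [hcast]
        have := Int.floor_le v
        have := Int.le_ceil u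
        linarith
      · have : (⌊v⌋ + 1 - ⌈u⌉).toNat = 0 := by omega
        rw [this]; simp; linarith
    calc (S.ncard : ℝ) ≤ _ := by exact_mod_cast h1
      _ ≤ v - u + 1 := h2
  have hlb : v - u - 1 ≤ (S.ncard : ℝ) := by
    have h1 : (Finset.Icc (⌊u⌋ + 1) (⌈v⌉ - 1)).card ≤ S.ncard := by
      rw [← Set.ncard_coe_finset]
      exact Set.ncard_le_ncard hSsup hfin
    have h2 : v - u - 1 ≤ ((Finset.Icc (⌊u⌋ + 1) (⌈v⌉ - 1)).card : ℝ) := by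
      rw [Int.card_Icc]
      rcases le_or_gt (⌊u⌋ + 1) (⌈v⌉ - 1) with h | h
      · have hnn : (0:ℤ) ≤ ⌈v⌉ - 1 + 1 - (⌊u⌋ + 1) := by omega
        have hcast : ((⌈v⌉ - 1 + 1 - (⌊u⌋ + 1)).toNat : ℝ) = ((⌈v⌉ : ℝ) - 1 - ⌊u⌋) := by
          rw [show (((⌈v⌉ - 1 + 1 - (⌊u⌋ + 1)).toNat : ℕ) : ℝ) = (((⌈v⌉ - 1 + 1 - (⌊u⌋ + 1)).toNat : ℤ) : ℝ) by push_cast; ring,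
            Int.toNat_of_nonneg hnn]
          push_cast; ring
        rw [hcast]
        have := Int.le_ceil v
        have := Int.floor_le u
        linarith
      · have hz : (⌈v⌉ - 1 + 1 - (⌊u⌋ + 1)).toNat = 0 := by omega
        rw [hz]
        simp only [Nat.cast_zero]
        have h3 : (⌈v⌉ : ℝ) ≤ ⌊u⌋ + 1 := by exact_mod_cast (by omega : ⌈v⌉ ≤ ⌊u⌋ + 1)
        have := Int.ceil_lt_add_one v
        have h4 := Int.le_ceil v
        have h5 := Int.floor_le u
        linarith
    calc v - u - 1 ≤ _ := h2
      _ ≤ (S.ncard : ℝ) := by exact_mod_cast h1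
  rw [hvol, abs_le]
  constructor <;> linarith



section Ins

variable {α : Type*} {d : ℕ}

/-- Prepend a value to a vector. -/
def ins (y : α) (x : Fin d → α) : Fin (d+1) → α :=
  Fin.insertNth (α := fun _ => α) 0 y x

@[simp] lemma ins_zero (y : α) (x : Fin d → α) : ins y x 0 = y := by
  simp [ins]

@[simp] lemma ins_succ (y : α) (x : Fin d → α) (j : Fin d) :
    ins y x j.succ = x j := by
  have h : (0 : Fin (d+1)).succAbove j = j.succ := by
    simp [Fin.succAbove]
  rw [ins, ← h, Fin.insertNth_apply_succAbove]

lemma ins_combo (a b : ℝ) (y₁ y₂ : ℝ) (x₁ x₂ : Fin d → ℝ) :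
    a • ins y₁ x₁ + b • ins y₂ x₂ = ins (a * y₁ + b * y₂) (a • x₁ + b • x₂) := by
  funext j
  refine Fin.cases ?_ ?_ j
  · simp
  · intro i; simp

end Ins

/-- measure of a convex set equals that of its closure and interior. -/
lemma vol_closure_convex {d : ℕ} {K : Set (Fin d → ℝ)} (hK : Convex ℝ K) :
    volume (closure K) = volume K := by
  have hf : volume (frontier K) = 0 := hK.addHaar_frontier volume
  refine le_antisymm ?_ (measure_mono subset_closure)
  calc volume (closure K) ≤ volume (K ∪ frontier K) := by
        refine measure_mono ?_
        intro x hx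
        by_cases h : x ∈ K
        · exact Or.inl h
        · exact Or.inr ⟨hx, fun hi => h (interior_subset hi)⟩
    _ ≤ volume K + volume (frontier K) := measure_union_le _ _
    _ = volume K := by rw [hf, add_zero]

lemma vol_interior_convex {d : ℕ} {K : Set (Fin d → ℝ)} (hK : Convex ℝ K) :
    volume (interior K) = volume K := by
  have hf : volume (frontier K) = 0 := hK.addHaar_frontier volume
  refine le_antisymm (measure_mono interior_subset) ?_
  calc volume K ≤ volume (interior K ∪ frontier K) := by
        refine measure_mono ?_
        intro x hx
        by_cases h : x ∈ interior K
        · exact Or.inl h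
        · exact Or.inr ⟨subset_closure hx, h⟩
    _ ≤ volume (interior K) + volume (frontier K) := measure_union_le _ _
    _ = volume (interior K) := by rw [hf, add_zero]

/-- Layer-cake for finite sums. -/
lemma sum_ofReal_eq_lintegral {β : Type*} (G : Finset β) (g : β → ℝ) (hg : ∀ n, 0 ≤ g n) :
    ∑ n ∈ G, ENNReal.ofReal (g n) =
      ∫⁻ t in Set.Ioi (0:ℝ), ((G.filter fun n => t < g n).card : ℝ≥0∞) := by
  have key : ∀ t : ℝ, ((G.filter fun n => t < g n).card : ℝ≥0∞) =
      ∑ n ∈ G, Set.indicator (Set.Iio (g n)) (fun _ => (1:ℝ≥0∞)) t := by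
    intro t
    rw [Finset.card_filter]
    push_cast
    refine Finset.sum_congr rfl fun n _ => ?_
    by_cases h : t < g n <;> simp [Set.indicator, Set.mem_Iio, h]
  rw [lintegral_congr fun t => key t]
  rw [lintegral_finset_sum _ fun n _ => (measurable_const.indicator measurableSet_Iio)]
  refine Finset.sum_congr rfl fun n _ => ?_
  rw [lintegral_indicator measurableSet_Iio, setLIntegral_one,
    Measure.restrict_apply measurableSet_Iio,
    show Set.Iio (g n) ∩ Set.Ioi 0 = Set.Ioo 0 (g n) by ext z; simp [Set.mem_Ioo, and_comm],
    Real.volume_Ioo, sub_zero]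



variable {d : ℕ}

lemma ins_tail {α : Type*} (n : Fin (d+1) → α) : ins (n 0) (Fin.tail n) = n := by
  funext j
  refine Fin.cases ?_ ?_ j
  · simp
  · intro i; simp [Fin.tail]

lemma tail_ins {α : Type*} (y : α) (x : Fin d → α) : Fin.tail (ins y x) = x := by
  funext j; simp [Fin.tail]

lemma ins_cast (y : ℤ) (x : Fin d → ℤ) :
    (fun j => ((ins y x j : ℤ) : ℝ)) = ins (y : ℝ) (fun j => (x j : ℝ)) := by
  funext j
  refine Fin.cases ?_ ?_ j
  · simp
  · intro i; simp

/-- Fiberwise decomposition of the lattice count. -/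
lemma icnt_decomp (K : Set (Fin (d+1) → ℝ)) (c : Fin (d+1) → ℝ) (R : ℝ)
    (hbox : ∀ x ∈ K, ∀ j, |x j - c j| ≤ R) :
    icnt K = ∑ n' ∈ boxL (fun j : Fin d => c j.succ) R,
      Set.ncard {y : ℤ | ins (y : ℝ) (fun j => (n' j : ℝ)) ∈ K} := by
  have hsub := ipts_subset_boxL hbox
  rw [icnt_eq_card hsub]
  rw [Finset.card_eq_sum_card_fiberwise
    (f := fun n : Fin (d+1) → ℤ => Fin.tail n)
    (t := boxL (fun j : Fin d => c j.succ) R) ?_]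
  · refine Finset.sum_congr rfl fun n' hn' => ?_
    have hfibset : {y : ℤ | ins (y : ℝ) (fun j => (n' j : ℝ)) ∈ K} =
        (((Finset.Icc ⌈c 0 - R⌉ ⌊c 0 + R⌋).filter
          fun y : ℤ => ins (y : ℝ) (fun j => (n' j : ℝ)) ∈ K : Finset ℤ) : Set ℤ) := by
      ext y
      simp only [Set.mem_setOf_eq, Finset.coe_filter, Finset.mem_coe, Finset.mem_Icc]
      constructor
      · intro hy
        have h := hbox _ hy 0
        simp only [ins_zero] at h
        have h1 := abs_le.1 h
        exact ⟨⟨Int.ceil_le.2 (by linarith [h1.2]), Int.le_floor.2 (by linarith [h1.1])⟩, hy⟩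
      · exact fun hy => hy.2
    rw [hfibset, Set.ncard_coe_finset]
    refine Finset.card_bij (fun n _ => n 0) ?_ ?_ ?_
    · intro n hn
      simp only [Finset.mem_filter] at hn
      obtain ⟨⟨hnbox, hnK⟩, hntail⟩ := hn
      simp only [boxL, Fintype.mem_piFinset] at hnbox
      simp only [Finset.mem_filter, Finset.mem_Icc]
      refine ⟨by simpa using hnbox 0, ?_⟩
      have : (fun j => ((n j : ℤ) : ℝ)) = ins ((n 0 : ℤ) : ℝ) (fun j => (n' j : ℝ)) := by
        rw [← hntail, ← ins_cast, ins_tail]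
      rwa [← this]
    · intro n₁ h₁ n₂ h₂ h0
      simp only [Finset.mem_filter] at h₁ h₂
      have ht : Fin.tail n₁ = Fin.tail n₂ := h₁.2.trans h₂.2.symm
      funext j
      refine Fin.cases ?_ ?_ j
      · exact h0
      · intro i; exact congrFun ht i
    · intro y hy
      simp only [Finset.mem_filter, Finset.mem_Icc] at hy
      refine ⟨ins y n', ?_, by simp⟩
      simp only [Finset.mem_filter]
      refine ⟨⟨?_, ?_⟩, tail_ins y n'⟩
      · simp only [boxL, Fintype.mem_piFinset]
        intro j
        refine Fin.cases ?_ ?_ j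
        · simpa using hy.1
        · intro i
          have := hn'
          simp only [boxL, Fintype.mem_piFinset] at this
          simpa using this i
      · rw [show (fun j => ((ins y n' j : ℤ) : ℝ)) = ins (y : ℝ) (fun j => (n' j : ℝ)) from ins_cast y n']
        exact hy.2
  · intro n hn
    simp only [Finset.mem_coe, Finset.mem_filter, boxL, Fintype.mem_piFinset] at hn ⊢
    intro j
    simpa [Fin.tail] using hn.1 j.succ

/-- Base case: dimension 0. -/
lemma Q_zero (K : Set (Fin 0 → ℝ)) : ((icnt K : ℝ)) = (volume K).toReal := by
  rcases Set.eq_empty_or_nonempty K with hK | hK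
  · subst hK; simp [icnt, iptsP]
  · have hKuniv : K = Set.univ := by
      obtain ⟨x, hx⟩ := hK
      refine Set.eq_univ_of_forall fun y => ?_
      have : y = x := funext fun j => Fin.elim0 j
      rwa [this]
    subst hKuniv
    have h1 : icnt (Set.univ : Set (Fin 0 → ℝ)) = 1 := by
      rw [icnt, iptsP]
      simp only [Set.mem_univ, Set.setOf_true]
      rw [Set.ncard_univ]
      simp [Nat.card_eq_fintype_card]
    have h2 : volume (Set.univ : Set (Fin 0 → ℝ)) = 1 := by
      rw [show (Set.univ : Set (Fin 0 → ℝ)) = Set.pi Set.univ (fun _ => Set.univ) by simp]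
      rw [volume_pi_pi]
      simp
    rw [h1, h2]
    simp

/-- The packing statement for open-or-closed convex bodies. -/
def QP (d : ℕ) (C : ℝ) : Prop :=
  ∀ R : ℝ, 1 ≤ R → ∀ c : Fin d → ℝ, ∀ K : Set (Fin d → ℝ), Convex ℝ K →
    (IsOpen K ∨ IsClosed K) → (∀ x ∈ K, ∀ j, |x j - c j| ≤ R) →
    |(icnt K : ℝ) - (volume K).toReal| ≤ C * R ^ ((d : ℤ) - 1)

/-- The packing statement for general convex bodies. -/
def QG (d : ℕ) (C : ℝ) : Prop :=
  ∀ R : ℝ, 1 ≤ R → ∀ c : Fin d → ℝ, ∀ K : Set (Fin d → ℝ), Convex ℝ K →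
    (∀ x ∈ K, ∀ j, |x j - c j| ≤ R) →
    |(icnt K : ℝ) - (volume K).toReal| ≤ C * R ^ ((d : ℤ) - 1)

lemma qg_of_qp {C : ℝ} (h : QP d C) : QG d C := by
  intro R hR c K hK hbox
  have hclosed : IsClosed {x : Fin d → ℝ | ∀ j, |x j - c j| ≤ R} := by
    rw [show {x : Fin d → ℝ | ∀ j, |x j - c j| ≤ R} = ⋂ j, {x | |x j - c j| ≤ R} by
      ext x; simp]
    exact isClosed_iInter fun j =>
      isClosed_le (((continuous_apply j).sub continuous_const).abs) continuous_const
  have hclbox : ∀ x ∈ closure K, ∀ j, |x j - c j| ≤ R := fun x hx =>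
    closure_minimal (fun y hy => hbox y hy) hclosed hx
  have hintbox : ∀ x ∈ interior K, ∀ j, |x j - c j| ≤ R := fun x hx =>
    hbox x (interior_subset hx)
  have hclfin : (iptsP (closure K)).Finite :=
    Set.Finite.subset (Finset.finite_toSet _) (ipts_subset_boxL hclbox)
  have hsub1 : iptsP (interior K) ⊆ iptsP K := by
    intro n hn
    show (fun j => ((n j : ℤ) : ℝ)) ∈ K
    exact interior_subset (hn : (fun j => ((n j : ℤ) : ℝ)) ∈ interior K)
  have hsub2 : iptsP K ⊆ iptsP (closure K) := by
    intro n hn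
    show (fun j => ((n j : ℤ) : ℝ)) ∈ closure K
    exact subset_closure (hn : (fun j => ((n j : ℤ) : ℝ)) ∈ K)
  have hmono1 : icnt (interior K) ≤ icnt K :=
    Set.ncard_le_ncard hsub1 (Set.Finite.subset hclfin hsub2)
  have hmono2 : icnt K ≤ icnt (closure K) :=
    Set.ncard_le_ncard hsub2 hclfin
  have hv1 : (volume (closure K)).toReal = (volume K).toReal := by
    rw [vol_closure_convex hK]
  have hv2 : (volume (interior K)).toReal = (volume K).toReal := by
    rw [vol_interior_convex hK]
  have hcl := h R hR c (closure K) hK.closure (Or.inr isClosed_closure) hclbox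
  have hint := h R hR c (interior K) hK.interior (Or.inl isOpen_interior) hintbox
  rw [hv1] at hcl
  rw [hv2] at hint
  have h1 := abs_le.1 hcl
  have h2 := abs_le.1 hint
  rw [abs_le]
  constructor
  · have : (icnt (interior K) : ℝ) ≤ icnt K := by exact_mod_cast hmono1
    linarith
  · have : (icnt K : ℝ) ≤ icnt (closure K) := by exact_mod_cast hmono2
    linarith



lemma ins_combo' {d : ℕ} {a b : ℝ} (hab : a + b = 1) (y₁ y₂ : ℝ) (x' : Fin d → ℝ) :
    a • ins y₁ x' + b • ins y₂ x' = ins (a * y₁ + b * y₂) x' := by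
  rw [ins_combo]
  congr 1
  rw [← add_smul, hab, one_smul]

lemma Icc_card_le {x R : ℝ} (hR : 1 ≤ R) :
    ((Finset.Icc ⌈x - R⌉ ⌊x + R⌋).card : ℝ) ≤ 3 * R := by
  rw [Int.card_Icc]
  rcases le_or_gt ⌈x - R⌉ ⌊x + R⌋ with h | h
  · have hnn : (0:ℤ) ≤ ⌊x + R⌋ + 1 - ⌈x - R⌉ := by omega
    have hcast : ((⌊x + R⌋ + 1 - ⌈x - R⌉).toNat : ℝ) = ((⌊x + R⌋ : ℝ) + 1 - ⌈x - R⌉) := by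
      rw [show (((⌊x + R⌋ + 1 - ⌈x - R⌉).toNat : ℕ) : ℝ) = (((⌊x + R⌋ + 1 - ⌈x - R⌉).toNat : ℤ) : ℝ) by push_cast; ring,
        Int.toNat_of_nonneg hnn]
      push_cast; ring
    rw [hcast]
    have h1 := Int.floor_le (x + R)
    have h2 := Int.le_ceil (x - R)
    linarith
  · have : (⌊x + R⌋ + 1 - ⌈x - R⌉).toNat = 0 := by omega
    rw [this]; simp; linarith

lemma ennreal_close {a b e : ℝ≥0∞} (ha : a ≠ ⊤) (hb : b ≠ ⊤) (he : e ≠ ⊤)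
    (h1 : a ≤ b + e) (h2 : b ≤ a + e) : |a.toReal - b.toReal| ≤ e.toReal := by
  rw [abs_le]
  constructor
  · have := ENNReal.toReal_mono (by finiteness) h2
    rw [ENNReal.toReal_add ha he] at this
    linarith
  · have := ENNReal.toReal_mono (by finiteness) h1
    rw [ENNReal.toReal_add hb he] at this
    linarith

set_option maxHeartbeats 2000000 in
/-- The induction step. -/
lemma qp_succ {d : ℕ} {Cd : ℝ} (hCd : 0 < Cd) (ih : QG d Cd) :
    QP (d + 1) (3 ^ d + 2 * Cd) := by
  intro R hR c K hK hoc hbox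
  have hR0 : (0:ℝ) < R := lt_of_lt_of_le one_pos hR
  have hKm : MeasurableSet K := hoc.elim (fun h => h.measurableSet) (fun h => h.measurableSet)
  set c' : Fin d → ℝ := fun j => c j.succ with hc'
  -- fibers
  set fib : (Fin d → ℝ) → Set ℝ := fun x' => {y : ℝ | ins y x' ∈ K} with hfibdef
  have hfib_convex : ∀ x', Convex ℝ (fib x') := by
    intro x' y₁ h₁ y₂ h₂ a b ha hb hab
    have hmem : a • ins y₁ x' + b • ins y₂ x' ∈ K := hK h₁ h₂ ha hb hab
    rw [ins_combo' hab] at hmem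
    simpa [fib, smul_eq_mul] using hmem
  have hfib_bound : ∀ x' y, y ∈ fib x' → |y - c 0| ≤ R := by
    intro x' y hy
    simpa using hbox _ hy 0
  have hfib_sub : ∀ x', fib x' ⊆ Set.Icc (c 0 - R) (c 0 + R) := by
    intro x' y hy
    have := abs_le.1 (hfib_bound x' y hy)
    exact ⟨by linarith [this.1], by linarith [this.2]⟩
  have hbase : ∀ x', (fib x').Nonempty → ∀ j, |x' j - c' j| ≤ R := by
    rintro x' ⟨y, hy⟩ j
    simpa using hbox _ hy j.succ
  set f : (Fin d → ℝ) → ℝ≥0∞ := fun x' => volume (fib x') with hfdef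
  have hf_le : ∀ x', f x' ≤ ENNReal.ofReal (2 * R) := by
    intro x'
    calc f x' ≤ volume (Set.Icc (c 0 - R) (c 0 + R)) := measure_mono (hfib_sub x')
      _ = ENNReal.ofReal (2 * R) := by rw [Real.volume_Icc]; ring_nf
  have hf_ne_top : ∀ x', f x' ≠ ⊤ := fun x' =>
    ne_top_of_le_ne_top (by finiteness) (hf_le x')
  set fR : (Fin d → ℝ) → ℝ := fun x' => (f x').toReal with hfRdef
  have hfR_nn : ∀ x', 0 ≤ fR x' := fun x' => ENNReal.toReal_nonneg
  have hfR_le : ∀ x', fR x' ≤ 2 * R := by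
    intro x'
    calc fR x' ≤ (ENNReal.ofReal (2 * R)).toReal :=
          ENNReal.toReal_mono (by finiteness) (hf_le x')
      _ = 2 * R := ENNReal.toReal_ofReal (by linarith)
  -- measurability via the product structure
  set e := MeasurableEquiv.piFinSuccAbove (fun _ : Fin (d+1) => ℝ) 0 with hedef
  set K'' : Set (ℝ × (Fin d → ℝ)) := ⇑e.symm ⁻¹' K with hK''def
  have hK''m : MeasurableSet K'' := e.symm.measurable hKm
  have hfiber_eq : ∀ x' : Fin d → ℝ, (fun y : ℝ => (y, x')) ⁻¹' K'' = fib x' := by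
    intro x'
    ext y
    simp only [Set.mem_preimage, hK''def, hedef, MeasurableEquiv.piFinSuccAbove_symm_apply]
    rfl
  have hf_meas : Measurable f := by
    have h := measurable_measure_prodMk_right (μ := (volume : Measure ℝ)) hK''m
    have : (fun x' : Fin d → ℝ => volume ((fun y : ℝ => (y, x')) ⁻¹' K'')) = f := by
      funext x'; rw [hfiber_eq x']
    rwa [this] at h
  have hfR_meas : Measurable fR := hf_meas.ennreal_toReal
  -- volume identity via Fubini
  have hvolK : volume K = ∫⁻ x', f x' := by
    have mp := measurePreserving_piFinSuccAbove (fun _ : Fin (d+1) => (volume : Measure ℝ)) 0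
    have h1 : ((volume : Measure ℝ).prod (Measure.pi fun _ : Fin d => (volume : Measure ℝ))) K''
        = Measure.pi (fun _ : Fin (d+1) => (volume : Measure ℝ)) K :=
      (MeasurePreserving.symm e mp).measure_preimage hKm.nullMeasurableSet
    have h2 : Measure.pi (fun _ : Fin (d+1) => (volume : Measure ℝ)) K = volume K := by
      rw [← volume_pi]
    have h3 : Measure.pi (fun _ : Fin d => (volume : Measure ℝ)) = (volume : Measure (Fin d → ℝ)) := by
      rw [← volume_pi]
    rw [h3] at h1
    rw [← h2, ← h1, Measure.prod_apply_symm hK''m]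
    exact lintegral_congr fun x' => by rw [hfiber_eq x']
  have hLC : volume K = ∫⁻ t in Set.Ioi (0:ℝ), volume {x' | t < fR x'} := by
    rw [hvolK]
    rw [show (fun x' => f x') = fun x' => ENNReal.ofReal (fR x') by
      funext x'; rw [ENNReal.ofReal_toReal (hf_ne_top x')]]
    exact lintegral_eq_lintegral_meas_lt volume
      (Filter.Eventually.of_forall hfR_nn) hfR_meas.aemeasurable
  set S : ℝ → Set (Fin d → ℝ) := fun t => {x' | t < fR x'} with hSdef
  have hS_nonempty_fib : ∀ t, 0 < t → ∀ x' ∈ S t, (fib x').Nonempty := by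
    intro t ht x' hx'
    have hne : volume (fib x') ≠ 0 := by
      intro h0
      have hz : fR x' = 0 := by
        have hrfl : fR x' = (volume (fib x')).toReal := rfl
        rw [hrfl, h0, ENNReal.toReal_zero]
      have hx'' : t < fR x' := hx'
      linarith
    exact nonempty_of_measure_ne_zero hne
  have hS_box : ∀ t, 0 < t → ∀ x' ∈ S t, ∀ j, |x' j - c' j| ≤ R := by
    intro t ht x' hx' j
    exact hbase x' (hS_nonempty_fib t ht x' hx') j
  have hS_empty : ∀ t, 2 * R < t → S t = ∅ := by
    intro t ht
    ext x'
    simp only [hSdef, Set.mem_setOf_eq, Set.mem_empty_iff_false, iff_false, not_lt]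
    linarith [hfR_le x']
  -- convexity of superlevel sets
  have hS_convex : ∀ t, 0 < t → Convex ℝ (S t) := by
    intro t ht x₁ hx₁ x₂ hx₂ a b ha hb hab
    rcases ha.eq_or_lt with ha0 | ha0
    · rw [← ha0] at hab ⊢
      have hb1 : b = 1 := by linarith
      rw [hb1]
      simpa using hx₂
    rcases hb.eq_or_lt with hb0 | hb0
    · rw [← hb0] at hab ⊢
      have ha1 : a = 1 := by linarith
      rw [ha1]
      simpa using hx₁
    have hx₁' : t < fR x₁ := hx₁
    have hx₂' : t < fR x₂ := hx₂
    have hne₁ : (fib x₁).Nonempty := hS_nonempty_fib t ht x₁ hx₁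
    have hne₂ : (fib x₂).Nonempty := hS_nonempty_fib t ht x₂ hx₂
    have hbb₁ : BddBelow (fib x₁) := ⟨c 0 - R, fun y hy => (hfib_sub x₁ hy).1⟩
    have hba₁ : BddAbove (fib x₁) := ⟨c 0 + R, fun y hy => (hfib_sub x₁ hy).2⟩
    have hbb₂ : BddBelow (fib x₂) := ⟨c 0 - R, fun y hy => (hfib_sub x₂ hy).1⟩
    have hba₂ : BddAbove (fib x₂) := ⟨c 0 + R, fun y hy => (hfib_sub x₂ hy).2⟩
    set u₁ := sInf (fib x₁); set v₁ := sSup (fib x₁)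
    set u₂ := sInf (fib x₂); set v₂ := sSup (fib x₂)
    have hlen₁ : t < v₁ - u₁ := by
      have h1 : fR x₁ ≤ v₁ - u₁ := by
        have hsub : fib x₁ ⊆ Set.Icc u₁ v₁ := fun y hy => ⟨csInf_le hbb₁ hy, le_csSup hba₁ hy⟩
        have := ENNReal.toReal_mono (by finiteness)
          (le_trans (measure_mono hsub) (le_of_eq Real.volume_Icc))
        rw [ENNReal.toReal_ofReal (by linarith [csInf_le_csSup hne₁ hbb₁ hba₁])] at this
        exact this
      linarith
    have hlen₂ : t < v₂ - u₂ := by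
      have h1 : fR x₂ ≤ v₂ - u₂ := by
        have hsub : fib x₂ ⊆ Set.Icc u₂ v₂ := fun y hy => ⟨csInf_le hbb₂ hy, le_csSup hba₂ hy⟩
        have := ENNReal.toReal_mono (by finiteness)
          (le_trans (measure_mono hsub) (le_of_eq Real.volume_Icc))
        rw [ENNReal.toReal_ofReal (by linarith [csInf_le_csSup hne₂ hbb₂ hba₂])] at this
        exact this
      linarith
    have hIoo₁ : Set.Ioo u₁ v₁ ⊆ fib x₁ := convex_Ioo_subset (hfib_convex x₁) hne₁ hbb₁ hba₁
    have hIoo₂ : Set.Ioo u₂ v₂ ⊆ fib x₂ := convex_Ioo_subset (hfib_convex x₂) hne₂ hbb₂ hba₂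
    set L := a * (v₁ - u₁) + b * (v₂ - u₂) with hLdef
    have hLt : t < L := by
      have h1 : a * t < a * (v₁ - u₁) := by exact mul_lt_mul_of_pos_left hlen₁ ha0
      have h2 : b * t < b * (v₂ - u₂) := by exact mul_lt_mul_of_pos_left hlen₂ hb0
      nlinarith [hab]
    have hLpos : 0 < L := lt_trans ht hLt
    have hsubIoo : Set.Ioo (a * u₁ + b * u₂) (a * v₁ + b * v₂) ⊆ fib (a • x₁ + b • x₂) := by
      intro z hz
      set s := (z - (a * u₁ + b * u₂)) / L with hsdef
      have hs0 : 0 < s := div_pos (by linarith [hz.1]) hLpos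
      have hs1 : s < 1 := by
        rw [div_lt_one hLpos]
        have := hz.2
        simp only [hLdef]
        linarith
      set y₁ := u₁ + s * (v₁ - u₁) with hy₁def
      set y₂ := u₂ + s * (v₂ - u₂) with hy₂def
      have hy₁ : y₁ ∈ Set.Ioo u₁ v₁ := by
        constructor
        · have : 0 < s * (v₁ - u₁) := mul_pos hs0 (by linarith)
          linarith
        · have : s * (v₁ - u₁) < 1 * (v₁ - u₁) := by
            apply mul_lt_mul_of_pos_right hs1; linarith
          linarith
      have hy₂ : y₂ ∈ Set.Ioo u₂ v₂ := by
        constructor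
        · have : 0 < s * (v₂ - u₂) := mul_pos hs0 (by linarith)
          linarith
        · have : s * (v₂ - u₂) < 1 * (v₂ - u₂) := by
            apply mul_lt_mul_of_pos_right hs1; linarith
          linarith
      have hsum : a * y₁ + b * y₂ = z := by
        have hsL : s * L = z - (a * u₁ + b * u₂) := by
          rw [hsdef, div_mul_cancel₀ _ (ne_of_gt hLpos)]
        simp only [hy₁def, hy₂def, hLdef] at *
        nlinarith [hsL]
      have hm₁ : ins y₁ x₁ ∈ K := hIoo₁ hy₁
      have hm₂ : ins y₂ x₂ ∈ K := hIoo₂ hy₂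
      have hcombo : a • ins y₁ x₁ + b • ins y₂ x₂ ∈ K := hK hm₁ hm₂ ha hb hab
      rw [ins_combo, hsum] at hcombo
      exact hcombo
    show t < fR (a • x₁ + b • x₂)
    have hge : ENNReal.ofReal L ≤ f (a • x₁ + b • x₂) := by
      calc ENNReal.ofReal L = volume (Set.Ioo (a * u₁ + b * u₂) (a * v₁ + b * v₂)) := by
            rw [Real.volume_Ioo]; congr 1; simp only [hLdef]; ring
        _ ≤ volume (fib (a • x₁ + b • x₂)) := measure_mono hsubIoo
    have := ENNReal.toReal_mono (hf_ne_top _) hge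
    rw [ENNReal.toReal_ofReal (le_of_lt hLpos)] at this
    calc t < L := hLt
      _ ≤ fR (a • x₁ + b • x₂) := this
  -- count side
  set G := boxL c' R with hGdef
  have hdecomp : icnt K = ∑ n' ∈ G, Set.ncard {y : ℤ | (y:ℝ) ∈ fib (fun j => (n' j : ℝ))} :=
    icnt_decomp K c R hbox
  have hper : ∀ n' ∈ G,
      |((Set.ncard {y : ℤ | (y:ℝ) ∈ fib (fun j => (n' j : ℝ))} : ℝ) -
        fR (fun j => (n' j : ℝ)))| ≤ 1 := by
    intro n' _
    exact count_interval (hfib_convex _) (hfib_sub _)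
  have hsum1 : |(icnt K : ℝ) - ∑ n' ∈ G, fR (fun j => (n' j : ℝ))| ≤ (G.card : ℝ) := by
    rw [hdecomp]
    push_cast
    rw [← Finset.sum_sub_distrib]
    calc |∑ n' ∈ G, ((Set.ncard {y : ℤ | (y:ℝ) ∈ fib (fun j => (n' j : ℝ))} : ℝ) -
            fR (fun j => (n' j : ℝ)))|
        ≤ ∑ n' ∈ G, |((Set.ncard {y : ℤ | (y:ℝ) ∈ fib (fun j => (n' j : ℝ))} : ℝ) -
            fR (fun j => (n' j : ℝ)))| := Finset.abs_sum_le_sum_abs _ _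
      _ ≤ ∑ _n' ∈ G, (1:ℝ) := Finset.sum_le_sum hper
      _ = (G.card : ℝ) := by simp
  have hGcard : (G.card : ℝ) ≤ (3*R)^d := by
    have h1 : G.card = ∏ j : Fin d, (Finset.Icc ⌈c' j - R⌉ ⌊c' j + R⌋).card := by
      rw [hGdef, boxL, Fintype.card_piFinset]
    rw [h1]
    push_cast
    calc ∏ j : Fin d, ((Finset.Icc ⌈c' j - R⌉ ⌊c' j + R⌋).card : ℝ)
        ≤ ∏ _j : Fin d, (3*R) := by
          refine Finset.prod_le_prod (fun j _ => by positivity) (fun j _ => Icc_card_le hR)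
      _ = (3*R)^d := by rw [Finset.prod_const]; simp
  -- layer cake for the sum
  have hSLC : ∑ n' ∈ G, ENNReal.ofReal (fR (fun j => (n' j : ℝ))) =
      ∫⁻ t in Set.Ioi (0:ℝ), ((G.filter fun n' => t < fR (fun j => (n' j : ℝ))).card : ℝ≥0∞) :=
    sum_ofReal_eq_lintegral G _ (fun n' => hfR_nn _)
  have hcnt_eq : ∀ t : ℝ, 0 < t →
      (G.filter fun n' => t < fR (fun j => (n' j : ℝ))).card = icnt (S t) := by
    intro t ht
    have hfe : (G.filter fun n' => t < fR (fun j => (n' j : ℝ))) =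
        ((boxL c' R).filter fun n => (fun j => ((n j : ℤ) : ℝ)) ∈ S t) := by
      ext n
      simp only [Finset.mem_filter, hSdef, Set.mem_setOf_eq, hGdef]
    rw [icnt_eq_card (ipts_subset_boxL (hS_box t ht)), hfe]
  have hq : ∀ t, 0 < t → |(icnt (S t) : ℝ) - (volume (S t)).toReal| ≤ Cd * R ^ ((d:ℤ)-1) :=
    fun t ht => ih R hR c' (S t) (hS_convex t ht) (hS_box t ht)
  -- finiteness
  have hKsub : K ⊆ Set.pi Set.univ (fun j => Set.Icc (c j - R) (c j + R)) := by
    intro x hx j _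
    have := abs_le.1 (hbox x hx j)
    exact ⟨by linarith [this.1], by linarith [this.2]⟩
  have hKfin : volume K ≠ ⊤ := by
    refine ne_top_of_le_ne_top ?_ (measure_mono hKsub)
    rw [volume_pi_pi]
    simp only [Real.volume_Icc]
    exact (ENNReal.prod_lt_top (fun j _ => ENNReal.ofReal_lt_top)).ne
  have hSsub : ∀ t, 0 < t → S t ⊆ Set.pi Set.univ (fun j => Set.Icc (c' j - R) (c' j + R)) := by
    intro t ht x' hx' j _
    have := abs_le.1 (hS_box t ht x' hx' j)
    exact ⟨by linarith [this.1], by linarith [this.2]⟩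
  have hSfin : ∀ t, 0 < t → volume (S t) ≠ ⊤ := by
    intro t ht
    refine ne_top_of_le_ne_top ?_ (measure_mono (hSsub t ht))
    rw [volume_pi_pi]
    simp only [Real.volume_Icc]
    exact (ENNReal.prod_lt_top (fun j _ => ENNReal.ofReal_lt_top)).ne
  set eps := Cd * R ^ ((d:ℤ)-1) with hepsdef
  have heps0 : 0 ≤ eps := by positivity
  set FC : ℝ → ℝ≥0∞ := fun t => ((G.filter fun n' => t < fR (fun j => (n' j : ℝ))).card : ℝ≥0∞)
    with hFCdef
  set FV : ℝ → ℝ≥0∞ := fun t => volume (S t) with hFVdef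
  have hsplit : ∀ g : ℝ → ℝ≥0∞, ∫⁻ t in Set.Ioi (0:ℝ), g t =
      (∫⁻ t in Set.Ioc (0:ℝ) (2*R), g t) + ∫⁻ t in Set.Ioi (2*R), g t := by
    intro g
    rw [← Set.Ioc_union_Ioi_eq_Ioi (by linarith : (0:ℝ) ≤ 2*R),
      Measure.restrict_union (Set.Ioc_disjoint_Ioi le_rfl) measurableSet_Ioi,
      lintegral_add_measure]
  have hFC_zero : ∫⁻ t in Set.Ioi (2*R), FC t = 0 := by
    have hz : ∀ t ∈ Set.Ioi (2*R), FC t = (fun _ => (0:ℝ≥0∞)) t := by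
      intro t ht
      have hempty : (G.filter fun n' => t < fR (fun j => (n' j : ℝ))) = ∅ := by
        refine Finset.filter_false_of_mem (fun n' _ => ?_)
        have := hfR_le (fun j => (n' j : ℝ))
        simp only [Set.mem_Ioi] at ht
        push_neg
        linarith
      simp only [hFCdef, hempty, Finset.card_empty, Nat.cast_zero]
    rw [setLIntegral_congr_fun measurableSet_Ioi hz, lintegral_zero]
  have hFV_zero : ∫⁻ t in Set.Ioi (2*R), FV t = 0 := by
    have hz : ∀ t ∈ Set.Ioi (2*R), FV t = (fun _ => (0:ℝ≥0∞)) t := by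
      intro t ht
      simp only [hFVdef]
      rw [hS_empty t (by simpa using ht), measure_empty]
    rw [setLIntegral_congr_fun measurableSet_Ioi hz, lintegral_zero]
  have hA : ∫⁻ t in Set.Ioi (0:ℝ), FC t = ∫⁻ t in Set.Ioc (0:ℝ) (2*R), FC t := by
    rw [hsplit FC, hFC_zero, add_zero]
  have hB : volume K = ∫⁻ t in Set.Ioc (0:ℝ) (2*R), FV t := by
    rw [hLC, hsplit FV, hFV_zero, add_zero]
  have hptw1 : ∀ t ∈ Set.Ioc (0:ℝ) (2*R), FC t ≤ FV t + ENNReal.ofReal eps := by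
    intro t ht
    have h1 := abs_le.1 (hq t ht.1)
    have h2 : (FC t : ℝ≥0∞) = ENNReal.ofReal ((icnt (S t) : ℝ)) := by
      rw [hFCdef]
      simp only [hcnt_eq t ht.1]
      rw [ENNReal.ofReal_natCast]
    have h3 : FV t = ENNReal.ofReal ((volume (S t)).toReal) := by
      rw [hFVdef]
      simp only
      rw [ENNReal.ofReal_toReal (hSfin t ht.1)]
    rw [h2, h3, ← ENNReal.ofReal_add ENNReal.toReal_nonneg heps0]
    exact ENNReal.ofReal_le_ofReal (by linarith [h1.2])
  have hptw2 : ∀ t ∈ Set.Ioc (0:ℝ) (2*R), FV t ≤ FC t + ENNReal.ofReal eps := by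
    intro t ht
    have h1 := abs_le.1 (hq t ht.1)
    have h2 : (FC t : ℝ≥0∞) = ENNReal.ofReal ((icnt (S t) : ℝ)) := by
      rw [hFCdef]
      simp only [hcnt_eq t ht.1]
      rw [ENNReal.ofReal_natCast]
    have h3 : FV t = ENNReal.ofReal ((volume (S t)).toReal) := by
      rw [hFVdef]
      simp only
      rw [ENNReal.ofReal_toReal (hSfin t ht.1)]
    rw [h2, h3, ← ENNReal.ofReal_add (by positivity) heps0]
    exact ENNReal.ofReal_le_ofReal (by linarith [h1.1])
  have hIocvol : volume (Set.Ioc (0:ℝ) (2*R)) = ENNReal.ofReal (2*R) := by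
    rw [Real.volume_Ioc]; ring_nf
  have hint1 : ∫⁻ t in Set.Ioc (0:ℝ) (2*R), FC t ≤
      (∫⁻ t in Set.Ioc (0:ℝ) (2*R), FV t) + ENNReal.ofReal eps * ENNReal.ofReal (2*R) := by
    calc ∫⁻ t in Set.Ioc (0:ℝ) (2*R), FC t
        ≤ ∫⁻ t in Set.Ioc (0:ℝ) (2*R), (FV t + ENNReal.ofReal eps) := by
          refine lintegral_mono_ae ((ae_restrict_iff' measurableSet_Ioc).2
            (ae_of_all _ hptw1))
      _ = (∫⁻ t in Set.Ioc (0:ℝ) (2*R), FV t) + ENNReal.ofReal eps * ENNReal.ofReal (2*R) := by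
          rw [lintegral_add_right _ measurable_const, setLIntegral_const, hIocvol]
  have hint2 : (∫⁻ t in Set.Ioc (0:ℝ) (2*R), FV t) ≤
      (∫⁻ t in Set.Ioc (0:ℝ) (2*R), FC t) + ENNReal.ofReal eps * ENNReal.ofReal (2*R) := by
    calc ∫⁻ t in Set.Ioc (0:ℝ) (2*R), FV t
        ≤ ∫⁻ t in Set.Ioc (0:ℝ) (2*R), (FC t + ENNReal.ofReal eps) := by
          refine lintegral_mono_ae ((ae_restrict_iff' measurableSet_Ioc).2
            (ae_of_all _ hptw2))
      _ = (∫⁻ t in Set.Ioc (0:ℝ) (2*R), FC t) + ENNReal.ofReal eps * ENNReal.ofReal (2*R) := by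
          rw [lintegral_add_right _ measurable_const, setLIntegral_const, hIocvol]
  have hBfin : (∫⁻ t in Set.Ioc (0:ℝ) (2*R), FV t) ≠ ⊤ := by rw [← hB]; exact hKfin
  have hAfin : (∫⁻ t in Set.Ioc (0:ℝ) (2*R), FC t) ≠ ⊤ := by
    refine ne_top_of_le_ne_top ?_ hint1
    finiteness
  have hclose := ennreal_close hAfin hBfin
    (by finiteness : ENNReal.ofReal eps * ENNReal.ofReal (2*R) ≠ ⊤) hint1 hint2
  have hsumval : (∫⁻ t in Set.Ioc (0:ℝ) (2*R), FC t).toReal =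
      ∑ n' ∈ G, fR (fun j => (n' j : ℝ)) := by
    rw [← hA, ← hSLC, ENNReal.toReal_sum (fun a _ => ENNReal.ofReal_ne_top)]
    exact Finset.sum_congr rfl fun n' _ => ENNReal.toReal_ofReal (hfR_nn _)
  have hvolval : (∫⁻ t in Set.Ioc (0:ℝ) (2*R), FV t).toReal = (volume K).toReal := by
    rw [← hB]
  have hepsval : (ENNReal.ofReal eps * ENNReal.ofReal (2*R)).toReal = eps * (2*R) := by
    rw [ENNReal.toReal_mul, ENNReal.toReal_ofReal heps0, ENNReal.toReal_ofReal (by linarith)]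
  rw [hsumval, hvolval, hepsval] at hclose
  -- final combination
  have hfinal : |(icnt K : ℝ) - (volume K).toReal| ≤ (3*R)^d + eps * (2*R) := by
    calc |(icnt K : ℝ) - (volume K).toReal|
        ≤ |(icnt K : ℝ) - ∑ n' ∈ G, fR (fun j => (n' j : ℝ))| +
          |(∑ n' ∈ G, fR (fun j => (n' j : ℝ))) - (volume K).toReal| := abs_sub_le _ _ _
      _ ≤ (G.card : ℝ) + eps * (2*R) := add_le_add hsum1 hclose
      _ ≤ (3*R)^d + eps * (2*R) := by linarith [hGcard]
  refine le_trans hfinal ?_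
  have hzpow : R ^ (((d+1:ℕ):ℤ)-1) = R ^ (d:ℤ) := by
    congr 1
    push_cast
    ring
  have hRd : R ^ (d:ℤ) = R ^ d := zpow_natCast R d
  rw [hzpow, hRd]
  have h1 : (3*R)^d = 3^d * R^d := mul_pow 3 R d
  have h2 : eps * (2*R) = 2 * Cd * R ^ d := by
    rw [hepsdef]
    have : R ^ ((d:ℤ)-1) * R = R ^ (d:ℤ) := by
      rw [zpow_sub_one₀ (ne_of_gt hR0) (d:ℤ)]
      field_simp
    rw [← hRd, ← this]
    ring
  rw [h1, h2]
  exact le_of_eq (by ring)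



lemma qp_all : ∀ d : ℕ, ∃ C : ℝ, 0 < C ∧ QP d C := by
  intro d
  induction d with
  | zero =>
    refine ⟨1, one_pos, ?_⟩
    intro R hR c K hK hoc hbox
    have hR0 : (0:ℝ) < R := lt_of_lt_of_le one_pos hR
    rw [Q_zero K]
    simp only [sub_self, abs_zero]
    have : (0:ℝ) < 1 * R ^ (((0:ℕ):ℤ) - 1) := by
      rw [one_mul]
      exact zpow_pos hR0 _
    linarith
  | succ d ih =>
    obtain ⟨Cd, hCd, hqp⟩ := ih
    exact ⟨3 ^ d + 2 * Cd, by positivity, qp_succ hCd (qg_of_qp hqp)⟩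

lemma qg_all (d : ℕ) : ∃ C : ℝ, 0 < C ∧ QG d C := by
  obtain ⟨C, hC, h⟩ := qp_all d
  exact ⟨C, hC, qg_of_qp h⟩




section Reduction

variable {d t : ℕ}

lemma psi_mod (A : Fin t → Fin d → ℤ) (b : Fin t → ℤ) (i : Fin t) {M : ℤ}
    (hdvd : (M : ℤ) ≠ 0) (n u : Fin d → ℤ) (hj : ∀ j, M ∣ (n j - u j)) {Di : ℤ}
    (hDi : Di ∣ M) : (Di ∣ psiZ A b i n ↔ Di ∣ psiZ A b i u) := by
  have hdiff : Di ∣ (psiZ A b i n - psiZ A b i u) := by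
    have heq : psiZ A b i n - psiZ A b i u = ∑ j, A i j * (n j - u j) := by
      simp only [psiZ, mul_sub, Finset.sum_sub_distrib]
      ring
    rw [heq]
    exact Finset.dvd_sum fun j _ => Dvd.dvd.mul_left (dvd_trans hDi (hj j)) (A i j)
  constructor
  · intro h
    have := dvd_sub h hdiff
    simpa using this
  · intro h
    have := dvd_add hdiff h
    simpa using this

end Reduction

set_option maxHeartbeats 2000000 in
/-- **Volume packing lemma.** For a convex body `K` contained in a translate of
`[-B,B]^d`, `Σ_{n ∈ ℤ^d ∩ K} ∏_i 1_{d_i ∣ ψ_i(n)} = vol(K) α(d_1,…,d_t) +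
O_d(B^{d-1} lcm(d_1,…,d_t))`. -/
theorem volume_packing (d t : ℕ) (hd : 0 < d) (ht : 0 < t) :
    ∃ C : ℝ, 0 < C ∧
      ∀ B : ℕ, 0 < B →
      ∀ (x₀ : Fin d → ℝ) (K : Set (Fin d → ℝ)), Convex ℝ K →
        (∀ x ∈ K, ∀ j, x j ∈ Set.Icc (x₀ j - (B : ℝ)) (x₀ j + (B : ℝ))) →
      ∀ (A : Fin t → Fin d → ℤ) (b : Fin t → ℤ), IsSystem A b →
      ∀ D : Fin t → ℕ, (∀ i, 0 < D i) →
        |(∑ n ∈ ptsBox (fun j => ⌈x₀ j⌉ - (B : ℤ)) (fun j => ⌊x₀ j⌋ + (B : ℤ)) K,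
              ∏ i, if (D i : ℤ) ∣ psiZ A b i n then (1 : ℝ) else 0) -
            (volume K).toReal * alphaD A b D| ≤
          C * (B : ℝ) ^ (d - 1) * (((univ : Finset (Fin t)).lcm D : ℕ) : ℝ) := by
  obtain ⟨C0, hC0, hQ⟩ := qg_all d
  refine ⟨C0 + 3 ^ d + 2 ^ d, by positivity, ?_⟩
  intro B hB x₀ K hKconv hbox A b _hsys D hD
  have hB0 : (0:ℝ) < B := by exact_mod_cast hB
  set m : ℕ := (univ : Finset (Fin t)).lcm D with hmdef
  have hm : 0 < m := by
    rcases Nat.eq_zero_or_pos m with h | h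
    · exfalso
      rw [hmdef, Finset.lcm_eq_zero_iff] at h
      obtain ⟨i, _, hi⟩ := h
      exact (hD i).ne' hi
    · exact h
  have hm0 : (0:ℝ) < m := by exact_mod_cast hm
  have hmZ : ((m:ℤ)) ≠ 0 := by exact_mod_cast hm.ne'
  have hDm : ∀ i, (D i : ℤ) ∣ (m : ℤ) := fun i =>
    Int.natCast_dvd_natCast.2 (Finset.dvd_lcm (Finset.mem_univ i))
  set lo : Fin d → ℤ := fun j => ⌈x₀ j⌉ - (B:ℤ) with hlodef
  set hi : Fin d → ℤ := fun j => ⌊x₀ j⌋ + (B:ℤ) with hhidef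
  have hKbox : ∀ x ∈ K, ∀ j, |x j - x₀ j| ≤ (B:ℝ) := by
    intro x hx j
    have := hbox x hx j
    rw [abs_le]
    exact ⟨by linarith [this.1], by linarith [this.2]⟩
  -- all integer points of K are in the ptsBox
  have hmemP : ∀ n : Fin d → ℤ, (fun j => (n j : ℝ)) ∈ K → n ∈ ptsBox lo hi K := by
    intro n hn
    rw [ptsBox, Finset.mem_filter]
    refine ⟨?_, hn⟩
    rw [Fintype.mem_piFinset]
    intro j
    have h := abs_le.1 (hKbox _ hn j)
    rw [Finset.mem_Icc]
    constructor
    · rw [hlodef]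
      have : (⌈x₀ j⌉ : ℝ) - B ≤ (n j : ℝ) + 1 - 1 := by
        have h2 : x₀ j - B ≤ (n j : ℝ) := by linarith [h.1]
        have h3 : ⌈x₀ j⌉ - (B:ℤ) ≤ n j := by
          have := Int.ceil_le.2 h2
          rwa [show x₀ j - (B:ℝ) = x₀ j - ((B:ℤ):ℝ) by push_cast; ring, Int.ceil_sub_intCast] at this
        exact_mod_cast by linarith [(show ((⌈x₀ j⌉ - (B:ℤ) : ℤ):ℝ) ≤ (n j : ℝ) by exact_mod_cast h3)]
      have h2 : x₀ j - B ≤ (n j : ℝ) := by linarith [h.1]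
      have h3 := Int.ceil_le.2 h2
      rwa [show x₀ j - (B:ℝ) = x₀ j - ((B:ℤ):ℝ) by push_cast; ring, Int.ceil_sub_intCast] at h3
    · rw [hhidef]
      have h2 : (n j : ℝ) ≤ x₀ j + B := by linarith [h.2]
      have h3 := Int.le_floor.2 h2
      rwa [show x₀ j + (B:ℝ) = x₀ j + ((B:ℤ):ℝ) by push_cast; ring, Int.floor_add_intCast] at h3
  -- the sum is the cardinality of P
  set P := (ptsBox lo hi K).filter (fun n => ∀ i, (D i : ℤ) ∣ psiZ A b i n) with hPdef
  have hsum_card : (∑ n ∈ ptsBox lo hi K, ∏ i, if (D i : ℤ) ∣ psiZ A b i n then (1:ℝ) else 0)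
      = (P.card : ℝ) := by
    have h1 : ∀ n : Fin d → ℤ, (∏ i, if (D i : ℤ) ∣ psiZ A b i n then (1:ℝ) else 0)
        = if (∀ i, (D i : ℤ) ∣ psiZ A b i n) then (1:ℝ) else 0 := by
      intro n
      rw [Finset.prod_boole]
      simp
    rw [hPdef]
    simp_rw [h1]
    rw [Finset.sum_boole]
  -- residues
  set ρ : (Fin d → ℤ) → (Fin d → ℕ) := fun n j => ((n j) % (m:ℤ)).toNat with hρdef
  set Sol := (Fintype.piFinset fun _ : Fin d => Finset.range m).filter
      (fun n => ∀ i, (D i : ℤ) ∣ psiZ A b i fun j => (n j : ℤ)) with hSoldef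
  have halpha : alphaD A b D = (Sol.card : ℝ) / (m:ℝ)^d := rfl
  have hρ_coe : ∀ (n : Fin d → ℤ) (j : Fin d), ((ρ n j : ℕ) : ℤ) = n j % (m:ℤ) := by
    intro n j
    exact Int.toNat_of_nonneg (Int.emod_nonneg _ hmZ)
  have hρ_mem : ∀ n, ρ n ∈ Fintype.piFinset (fun _ : Fin d => Finset.range m) := by
    intro n
    rw [Fintype.mem_piFinset]
    intro j
    rw [Finset.mem_range]
    have h1 : (n j) % (m:ℤ) < (m:ℤ) := Int.emod_lt_of_pos _ (by exact_mod_cast hm)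
    have := hρ_coe n j
    omega
  have hρ_dvd : ∀ (n : Fin d → ℤ) (j : Fin d), (m:ℤ) ∣ (n j - ((ρ n j : ℕ) : ℤ)) := by
    intro n j
    exact ⟨n j / m, by rw [hρ_coe n j, Int.emod_def]; ring⟩
  have hcard_split : P.card = ∑ r ∈ Sol, (P.filter fun n => ρ n = r).card := by
    refine Finset.card_eq_sum_card_fiberwise (fun n hn => ?_)
    rw [hSoldef, Finset.mem_coe, Finset.mem_filter]
    refine ⟨hρ_mem n, fun i => ?_⟩
    have hn' : ∀ i, (D i:ℤ) ∣ psiZ A b i n := (Finset.mem_filter.1 hn).2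
    exact (psi_mod A b i hmZ n (fun j => ((ρ n j : ℕ):ℤ)) (hρ_dvd n) (hDm i)).1 (hn' i)
  -- per-residue counting via the rescaled body
  have hrKey : ∀ r ∈ Sol, ∀ bound : ℝ,
      (|(icnt ((fun x : Fin d → ℝ => ((m:ℝ))⁻¹ • (x - fun j => ((r j : ℕ) : ℝ))) '' K) : ℝ) -
        (volume ((fun x : Fin d → ℝ => ((m:ℝ))⁻¹ • (x - fun j => ((r j : ℕ) : ℝ))) '' K)).toReal| ≤ bound) →
      |((P.filter fun n => ρ n = r).card : ℝ) -
        (volume K).toReal * ((m:ℝ)⁻¹)^d| ≤ bound := by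
    intro r hrSol bound hbound
    set rr : Fin d → ℝ := fun j => ((r j : ℕ) : ℝ) with hrrdef
    set Kr := (fun x : Fin d → ℝ => ((m:ℝ))⁻¹ • (x - rr)) '' K with hKrdef
    have hrlt : ∀ j, (r j : ℤ) < (m:ℤ) := by
      intro j
      have := (Finset.mem_filter.1 hrSol).1
      rw [Fintype.mem_piFinset] at this
      exact_mod_cast Finset.mem_range.1 (this j)
    have hrSol' : ∀ i, (D i : ℤ) ∣ psiZ A b i fun j => (r j : ℤ) :=
      (Finset.mem_filter.1 hrSol).2
    -- membership characterization of Kr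
    have hKr_mem : ∀ x : Fin d → ℝ, x ∈ Kr ↔ ((m:ℝ) • x + rr) ∈ K := by
      intro x
      rw [hKrdef]
      constructor
      · rintro ⟨y, hy, rfl⟩
        show ((m:ℝ) • (((m:ℝ))⁻¹ • (y - rr)) + rr) ∈ K
        have : (m:ℝ) • ((m:ℝ)⁻¹ • (y - rr)) + rr = y := by
          rw [smul_smul, mul_inv_cancel₀ (ne_of_gt hm0), one_smul]
          funext j; simp
        rwa [this]
      · intro hx
        refine ⟨(m:ℝ) • x + rr, hx, ?_⟩
        show ((m:ℝ))⁻¹ • ((m:ℝ) • x + rr - rr) = x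
        rw [add_sub_cancel_right, smul_smul, inv_mul_cancel₀ (ne_of_gt hm0), one_smul]
    set g : (Fin d → ℤ) → (Fin d → ℤ) := fun n' => fun j => (m:ℤ) * n' j + (r j : ℕ) with hgdef
    have hginj : Function.Injective g := by
      intro a a' haa
      funext j
      have := congrFun haa j
      simp only [hgdef] at this
      have : (m:ℤ) * a j = (m:ℤ) * a' j := by omega
      exact mul_left_cancel₀ hmZ this
    have hgcoe : ∀ n' : Fin d → ℤ, (fun j => ((g n' j : ℤ) : ℝ)) = (m:ℝ) • (fun j => (n' j : ℝ)) + rr := by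
      intro n'
      funext j
      simp only [hgdef, hrrdef, Pi.add_apply, Pi.smul_apply, smul_eq_mul]
      push_cast
      ring
    have hset : (↑(P.filter fun n => ρ n = r) : Set (Fin d → ℤ)) = g '' iptsP Kr := by
      ext n
      simp only [Finset.coe_filter, Set.mem_setOf_eq, Set.mem_image]
      constructor
      · rintro ⟨hnP, hρn⟩
        rw [hPdef, Finset.mem_filter] at hnP
        obtain ⟨hnbox, _hndvd⟩ := hnP
        have hnK : (fun j => (n j : ℝ)) ∈ K := (Finset.mem_filter.1 hnbox).2
        refine ⟨fun j => n j / (m:ℤ), ?_, ?_⟩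
        · show (fun j => ((n j / (m:ℤ) : ℤ) : ℝ)) ∈ Kr
          rw [hKr_mem]
          have hg : g (fun j => n j / (m:ℤ)) = n := by
            funext j
            simp only [hgdef]
            have h1 : ((r j : ℕ) : ℤ) = n j % (m:ℤ) := by
              rw [← hρn]; exact hρ_coe n j
            rw [h1]
            exact Int.mul_ediv_add_emod (n j) (m:ℤ)
          rw [← hgcoe]
          rw [hg]
          exact hnK
        · funext j
          simp only [hgdef]
          have h1 : ((r j : ℕ) : ℤ) = n j % (m:ℤ) := by
            rw [← hρn]; exact hρ_coe n j
          rw [h1]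
          exact Int.mul_ediv_add_emod (n j) (m:ℤ)
      · rintro ⟨n', hn', rfl⟩
        have hgK : (fun j => ((g n' j : ℤ) : ℝ)) ∈ K := by
          rw [hgcoe]
          exact (hKr_mem _).1 hn'
        have hρg : ρ (g n') = r := by
          funext j
          simp only [hρdef, hgdef]
          have h1 : ((m:ℤ) * n' j + ((r j : ℕ) : ℤ)) % (m:ℤ) = ((r j : ℕ) : ℤ) % (m:ℤ) := by
            rw [add_comm, mul_comm, Int.add_mul_emod_self_right]
          have h2 : ((r j : ℕ) : ℤ) % (m:ℤ) = ((r j : ℕ) : ℤ) :=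
            Int.emod_eq_of_lt (by positivity) (hrlt j)
          rw [h1, h2]
          exact Int.toNat_natCast _
        constructor
        · rw [hPdef, Finset.mem_filter]
          refine ⟨hmemP _ hgK, fun i => ?_⟩
          have hdvd : ∀ j, (m:ℤ) ∣ (g n' j - ((r j : ℕ) : ℤ)) := by
            intro j
            simp only [hgdef]
            exact ⟨n' j, by ring⟩
          exact (psi_mod A b i hmZ (g n') (fun j => ((r j : ℕ):ℤ)) hdvd (hDm i)).2 (hrSol' i)
        · exact hρg
    have hcard_eq : ((P.filter fun n => ρ n = r).card : ℕ) = icnt Kr := by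
      rw [icnt, ← Set.ncard_coe_finset, hset, Set.ncard_image_of_injective _ hginj]
    -- volume of Kr
    have hKfin : volume K ≠ ⊤ := by
      have hKsub : K ⊆ Set.pi Set.univ (fun j => Set.Icc (x₀ j - (B:ℝ)) (x₀ j + (B:ℝ))) := by
        intro x hx j _
        exact hbox x hx j
      refine ne_top_of_le_ne_top ?_ (measure_mono hKsub)
      rw [volume_pi_pi]
      simp only [Real.volume_Icc]
      exact (ENNReal.prod_lt_top (fun j _ => ENNReal.ofReal_lt_top)).ne
    have hKr_vol : (volume Kr).toReal = (volume K).toReal * ((m:ℝ)⁻¹)^d := by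
      have h1 : Kr = ((m:ℝ)⁻¹) • ((fun x : Fin d → ℝ => -rr + x) '' K) := by
        rw [hKrdef, ← Set.image_smul, ← Set.image_comp]
        congr 1
        funext x
        simp only [Function.comp_apply]
        congr 1
        funext j
        simp [sub_eq_neg_add]
      have h2 : volume ((fun x : Fin d → ℝ => -rr + x) '' K) = volume K := by
        have : (fun x : Fin d → ℝ => -rr + x) '' K = (fun x : Fin d → ℝ => rr + x) ⁻¹' K := by
          ext z
          simp only [Set.mem_image, Set.mem_preimage]
          constructor
          · rintro ⟨y, hy, rfl⟩
            have : rr + (-rr + y) = y := by funext j; simp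
            rwa [this]
          · intro hz
            exact ⟨rr + z, hz, by funext j; simp⟩
        rw [this]
        exact measure_preimage_add volume rr K
      have h3 : Module.finrank ℝ (Fin d → ℝ) = d := by
        rw [Module.finrank_pi]
        simp
      rw [h1, Measure.addHaar_smul, h2, h3]
      rw [ENNReal.toReal_mul, ENNReal.toReal_ofReal (abs_nonneg _)]
      rw [abs_of_nonneg (by positivity)]
      ring
    rw [← hKr_vol]
    rw [show ((P.filter fun n => ρ n = r).card : ℝ) = (icnt Kr : ℝ) by exact_mod_cast hcard_eq]
    exact hbound
  rw [hsum_card, halpha]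
  rcases le_or_gt (m:ℝ) (B:ℝ) with hmB | hmB
  · -- main case: m ≤ B
    set R : ℝ := (B:ℝ) / m with hRdef
    have hR1 : 1 ≤ R := (one_le_div hm0).2 hmB
    have hest : ∀ r ∈ Sol, |((P.filter fun n => ρ n = r).card : ℝ) -
        (volume K).toReal * ((m:ℝ)⁻¹)^d| ≤ C0 * R ^ ((d:ℤ)-1) := by
      intro r hr
      refine hrKey r hr _ ?_
      set rr : Fin d → ℝ := fun j => ((r j : ℕ) : ℝ) with hrrdef
      set Kr := (fun x : Fin d → ℝ => ((m:ℝ))⁻¹ • (x - rr)) '' K with hKrdef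
      have hKr_conv : Convex ℝ Kr := by
        rintro y₁ ⟨x₁, hx₁, rfl⟩ y₂ ⟨x₂, hx₂, rfl⟩ a a' ha ha' haa
        refine ⟨a • x₁ + a' • x₂, hKconv hx₁ hx₂ ha ha' haa, ?_⟩
        show ((m:ℝ))⁻¹ • (a • x₁ + a' • x₂ - rr) =
          a • (((m:ℝ))⁻¹ • (x₁ - rr)) + a' • (((m:ℝ))⁻¹ • (x₂ - rr))
        have hrr2 : rr = a • rr + a' • rr := by rw [← add_smul, haa, one_smul]
        have hkey : a • x₁ + a' • x₂ - rr = a • (x₁ - rr) + a' • (x₂ - rr) := by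
          rw [smul_sub, smul_sub]
          nth_rewrite 1 [hrr2]
          abel
        rw [hkey, smul_add, smul_comm ((m:ℝ))⁻¹ a, smul_comm ((m:ℝ))⁻¹ a']
      have hKr_box : ∀ x ∈ Kr, ∀ j, |x j - (x₀ j - rr j)/m| ≤ R := by
        rintro x ⟨y, hy, rfl⟩ j
        show |((m:ℝ))⁻¹ * (y j - rr j) - (x₀ j - rr j)/m| ≤ R
        have heq2 : ((m:ℝ))⁻¹ * (y j - rr j) - (x₀ j - rr j)/m = (y j - x₀ j)/m := by
          field_simp
          ring
        rw [heq2, hRdef, abs_div, abs_of_pos hm0]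
        exact (div_le_div_iff_of_pos_right hm0).2 (hKbox y hy j)
      exact hQ R hR1 _ Kr hKr_conv hKr_box
    have hsum_eq : (P.card : ℝ) = ∑ r ∈ Sol, ((P.filter fun n => ρ n = r).card : ℝ) := by
      rw [hcard_split]; push_cast; ring
    have hconst : (volume K).toReal * ((Sol.card:ℝ)/(m:ℝ)^d)
        = ∑ _r ∈ Sol, (volume K).toReal * ((m:ℝ)⁻¹)^d := by
      rw [Finset.sum_const, nsmul_eq_mul, inv_pow]
      field_simp
    have hSolcard : (Sol.card : ℝ) ≤ (m:ℝ)^d := by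
      have h1 : Sol.card ≤ m^d := by
        calc Sol.card ≤ (Fintype.piFinset fun _ : Fin d => Finset.range m).card :=
              Finset.card_filter_le _ _
          _ = m^d := by rw [Fintype.card_piFinset]; simp
      exact_mod_cast h1
    set k := d - 1 with hkdef
    have hdk : d = k + 1 := (Nat.succ_pred_eq_of_pos hd).symm
    have hzp : R ^ ((d:ℤ)-1) = R ^ k := by
      rw [show ((d:ℤ)-1) = (k:ℤ) by rw [hdk]; push_cast; ring, zpow_natCast]
    have hkey2 : (m:ℝ)^d * (C0 * R ^ ((d:ℤ)-1)) = C0 * (B:ℝ)^(d-1) * m := by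
      rw [hzp, hRdef, div_pow, ← hkdef]
      rw [show (m:ℝ)^d = (m:ℝ)^k * m by rw [hdk, pow_succ]]
      field_simp
    calc |(P.card:ℝ) - (volume K).toReal * ((Sol.card:ℝ)/(m:ℝ)^d)|
        = |∑ r ∈ Sol, (((P.filter fun n => ρ n = r).card : ℝ) -
            (volume K).toReal * ((m:ℝ)⁻¹)^d)| := by
          rw [hsum_eq, hconst, ← Finset.sum_sub_distrib]
      _ ≤ ∑ r ∈ Sol, |((P.filter fun n => ρ n = r).card : ℝ) -
            (volume K).toReal * ((m:ℝ)⁻¹)^d| := Finset.abs_sum_le_sum_abs _ _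
      _ ≤ ∑ _r ∈ Sol, C0 * R ^ ((d:ℤ)-1) := Finset.sum_le_sum hest
      _ = (Sol.card : ℝ) * (C0 * R ^ ((d:ℤ)-1)) := by
          rw [Finset.sum_const, nsmul_eq_mul]
      _ ≤ (m:ℝ)^d * (C0 * R ^ ((d:ℤ)-1)) := by
          refine mul_le_mul_of_nonneg_right hSolcard ?_
          have : (0:ℝ) < R := lt_of_lt_of_le one_pos hR1
          positivity
      _ = C0 * (B:ℝ)^(d-1) * m := hkey2
      _ ≤ (C0 + 3^d + 2^d) * (B:ℝ)^(d-1) * m := by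
          have h2 : (0:ℝ) ≤ ((3:ℝ)^d + 2^d) * ((B:ℝ)^(d-1) * m) := by positivity
          nlinarith [h2]
  · -- trivial case: B < m
    have hPcard : (P.card : ℝ) ≤ (3:ℝ)^d * (B:ℝ)^d := by
      have h1 : P.card ≤ (ptsBox lo hi K).card := Finset.card_filter_le _ _
      have h2 : (ptsBox lo hi K).card ≤
          (Fintype.piFinset fun j => Finset.Icc (lo j) (hi j)).card := by
        rw [ptsBox]
        exact Finset.card_filter_le _ _
      have h3 : (Fintype.piFinset fun j => Finset.Icc (lo j) (hi j)).card
          = ∏ j, (Finset.Icc (lo j) (hi j)).card := Fintype.card_piFinset _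
      have h4 : ∀ j, ((Finset.Icc (lo j) (hi j)).card : ℝ) ≤ 3 * B := by
        intro j
        rw [Int.card_Icc]
        have hfc : ⌊x₀ j⌋ ≤ ⌈x₀ j⌉ := Int.floor_le_ceil _
        have h5 : (hi j + 1 - lo j).toNat ≤ 2 * B + 1 := by
          simp only [hhidef, hlodef]
          omega
        calc ((hi j + 1 - lo j).toNat : ℝ) ≤ ((2*B+1 : ℕ) : ℝ) := by exact_mod_cast h5
          _ ≤ 3 * B := by
            push_cast
            have : (1:ℝ) ≤ B := by exact_mod_cast hB
            linarith
      calc (P.card : ℝ) ≤ ((Fintype.piFinset fun j => Finset.Icc (lo j) (hi j)).card : ℝ) := by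
            exact_mod_cast le_trans h1 h2
        _ = ∏ j, ((Finset.Icc (lo j) (hi j)).card : ℝ) := by rw [h3]; push_cast; ring
        _ ≤ ∏ _j : Fin d, (3 * (B:ℝ)) :=
            Finset.prod_le_prod (fun j _ => by positivity) (fun j _ => h4 j)
        _ = (3*(B:ℝ))^d := by rw [Finset.prod_const]; simp
        _ = 3^d * (B:ℝ)^d := mul_pow _ _ _
    have hvol_le : (volume K).toReal ≤ (2:ℝ)^d * (B:ℝ)^d := by
      have hKsub : K ⊆ Set.pi Set.univ (fun j => Set.Icc (x₀ j - (B:ℝ)) (x₀ j + (B:ℝ))) :=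
        fun x hx j _ => hbox x hx j
      have h2 : volume (Set.pi Set.univ (fun j => Set.Icc (x₀ j - (B:ℝ)) (x₀ j + (B:ℝ))))
          = ENNReal.ofReal ((2*(B:ℝ)))^d := by
        rw [volume_pi_pi]
        simp only [Real.volume_Icc]
        have hcong : ∀ j : Fin d, ENNReal.ofReal (x₀ j + B - (x₀ j - B))
            = ENNReal.ofReal (2*(B:ℝ)) := fun j => by ring_nf
        rw [Finset.prod_congr rfl (fun j _ => hcong j), Finset.prod_const]
        simp
      calc (volume K).toReal
          ≤ (volume (Set.pi Set.univ (fun j => Set.Icc (x₀ j - (B:ℝ)) (x₀ j + (B:ℝ))))).toReal := by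
            refine ENNReal.toReal_mono ?_ (measure_mono hKsub)
            rw [h2]
            exact (ENNReal.pow_ne_top ENNReal.ofReal_ne_top)
        _ = ((2*(B:ℝ)))^d := by
            rw [h2, ← ENNReal.ofReal_pow (by positivity), ENNReal.toReal_ofReal (by positivity)]
        _ = 2^d * (B:ℝ)^d := mul_pow _ _ _
    have halpha_le : (Sol.card : ℝ)/(m:ℝ)^d ≤ 1 := by
      rw [div_le_one (by positivity)]
      have h1 : Sol.card ≤ m^d := by
        calc Sol.card ≤ (Fintype.piFinset fun _ : Fin d => Finset.range m).card :=
              Finset.card_filter_le _ _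
          _ = m^d := by rw [Fintype.card_piFinset]; simp
      exact_mod_cast h1
    have halpha_nn : (0:ℝ) ≤ (Sol.card : ℝ)/(m:ℝ)^d := by positivity
    have hvolK_nn : (0:ℝ) ≤ (volume K).toReal := ENNReal.toReal_nonneg
    have hprod_le : (volume K).toReal * ((Sol.card:ℝ)/(m:ℝ)^d) ≤ 2^d * (B:ℝ)^d := by
      calc (volume K).toReal * ((Sol.card:ℝ)/(m:ℝ)^d) ≤ (2^d * (B:ℝ)^d) * 1 :=
            mul_le_mul hvol_le halpha_le halpha_nn (by positivity)
        _ = 2^d * (B:ℝ)^d := mul_one _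
    have hBd : (B:ℝ)^d = (B:ℝ)^(d-1) * B := by
      conv_lhs => rw [show d = (d-1)+1 from (Nat.succ_pred_eq_of_pos hd).symm]
      rw [pow_succ]
    have hBm : (B:ℝ) ≤ (m:ℝ) := le_of_lt hmB
    have hprodnn : (0:ℝ) ≤ (volume K).toReal * ((Sol.card:ℝ)/(m:ℝ)^d) :=
      mul_nonneg hvolK_nn halpha_nn
    have hPnn : (0:ℝ) ≤ (P.card : ℝ) := Nat.cast_nonneg _
    calc |(P.card:ℝ) - (volume K).toReal * ((Sol.card:ℝ)/(m:ℝ)^d)|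
        ≤ (P.card:ℝ) + (volume K).toReal * ((Sol.card:ℝ)/(m:ℝ)^d) := by
          rw [abs_le]
          constructor <;> linarith
      _ ≤ 3^d * (B:ℝ)^d + 2^d * (B:ℝ)^d := add_le_add hPcard hprod_le
      _ = (3^d + 2^d) * ((B:ℝ)^(d-1) * B) := by rw [← hBd]; ring
      _ ≤ (3^d + 2^d) * ((B:ℝ)^(d-1) * m) := by
          refine mul_le_mul_of_nonneg_left ?_ (by positivity)
          exact mul_le_mul_of_nonneg_left hBm (by positivity)
      _ ≤ (C0 + 3^d + 2^d) * (B:ℝ)^(d-1) * m := by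
          have h2 : (0:ℝ) ≤ C0 * ((B:ℝ)^(d-1) * m) := by positivity
          nlinarith [h2]

end DivisorCorr
end
end

section
/- Bounds on local divisor densities at prime powers. Let Ψ = (ψ_1, …, ψ_t) : ℤ^d → ℤ^t be a system of affine-linear forms, let p be a prime, and let a_1, …, a_t be non-negative integers. (a) If i ≠ j, a_i ≥ 1, a_j ≥ 1, and ψ_i and ψ_j are not affinely related modulo p, then α(p^{a_1}, …, p^{a_t}) ≤ p^{−a_i − a_j}. (b) Consequently, if p is not exceptional for Ψ and at least two of the exponents a_1, …, a_t are nonzero, then α(p^{a_1}, …, p^{a_t}) ≤ p^{−(max_k a_k) − 1}. -/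
open MeasureTheory Finset Filter
open scoped Classical BigOperators

noncomputable section

namespace DivisorCorr

lemma fiber_card_mul {G H : Type*} [AddCommGroup G] [AddCommGroup H] [Fintype G] [Fintype H]
    [DecidableEq H] (f : G →+ H) (hf : Function.Surjective f) (c : H) :
    ((univ : Finset G).filter fun x => f x = c).card * Fintype.card H = Fintype.card G := by
  classical
  obtain ⟨x0, hx0⟩ := hf c
  have hcard : ((univ : Finset G).filter fun x => f x = c).card = Nat.card f.ker := by
    rw [Nat.card_eq_fintype_card, ← Fintype.card_subtype]
    apply Fintype.card_congr
    exact
      { toFun := fun x => ⟨x.1 - x0, by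
          simp [AddMonoidHom.mem_ker, map_sub, x.2, hx0]⟩
        invFun := fun y => ⟨y.1 + x0, by
          have h := y.2
          simp only [AddMonoidHom.mem_ker] at h
          simp [map_add, h, hx0]⟩
        left_inv := fun x => by simp
        right_inv := fun y => by simp }
  have h2 : Nat.card G = Nat.card (G ⧸ f.ker) * Nat.card f.ker :=
    AddSubgroup.card_eq_card_quotient_mul_card_addSubgroup f.ker
  have h3 : Nat.card (G ⧸ f.ker) = Nat.card H :=
    Nat.card_congr (QuotientAddGroup.quotientKerEquivOfSurjective f hf).toEquiv
  rw [hcard, ← Nat.card_eq_fintype_card, ← Nat.card_eq_fintype_card, h2, h3, Nat.mul_comm]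

lemma count_le (d t M : ℕ) (A : Fin t → Fin d → ℤ) (b : Fin t → ℤ)
    (p : ℕ) (hp : p.Prime) (a : Fin t → ℕ) (i j : Fin t)
    (hai : a i ≤ M) (haj : a j ≤ M)
    (k l : Fin d) (hkl : ¬ (p:ℤ) ∣ (A i k * A j l - A i l * A j k)) :
    ((Fintype.piFinset fun _ : Fin d => Finset.range (p ^ M)).filter
        fun n => ∀ i', ((p ^ a i' : ℕ) : ℤ) ∣ psiZ A b i' fun c => (n c : ℤ)).card
      * (p ^ (a i + a j)) ≤ (p ^ M) ^ d := by
  classical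
  haveI : NeZero (p ^ M) := ⟨pow_ne_zero _ hp.pos.ne'⟩
  haveI : NeZero (p ^ a i) := ⟨pow_ne_zero _ hp.pos.ne'⟩
  haveI : NeZero (p ^ a j) := ⟨pow_ne_zero _ hp.pos.ne'⟩
  set m := p ^ M with hm
  let φi : ZMod m →+* ZMod (p ^ a i) := ZMod.castHom (pow_dvd_pow p hai) _
  let φj : ZMod m →+* ZMod (p ^ a j) := ZMod.castHom (pow_dvd_pow p haj) _
  let f : (Fin d → ZMod m) →+ ZMod (p ^ a i) × ZMod (p ^ a j) :=
  { toFun := fun n => (φi (∑ c, (A i c : ZMod m) * n c), φj (∑ c, (A j c : ZMod m) * n c))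
    map_zero' := by simp
    map_add' := fun x y => by
      simp only [Pi.add_apply, mul_add, Finset.sum_add_distrib, map_add, Prod.mk_add_mk] }
  have hkl' : k ≠ l := by
    rintro rfl
    exact hkl (by ring_nf; exact dvd_zero _)
  have hcop : IsCoprime (A i k * A j l - A i l * A j k) ((p : ℤ) ^ M) :=
    ((Int.prime_iff_natAbs_prime.mpr (by simpa using hp)).coprime_iff_not_dvd.mpr hkl).symm.pow_right
  obtain ⟨s, t', hst⟩ := hcop
  have hz : ((p : ZMod m)) ^ M = 0 := by
    have := ZMod.natCast_self m
    rw [hm] at this ⊢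
    push_cast at this
    exact this
  have hs : (s : ZMod m) * ((A i k : ZMod m) * (A j l : ZMod m)
      - (A i l : ZMod m) * (A j k : ZMod m)) = 1 := by
    have := congrArg (fun z : ℤ => (z : ZMod m)) hst
    push_cast at this
    rw [hz] at this
    simpa using this
  have hsum : ∀ (g : Fin d → ZMod m) (u v : ZMod m),
      (∑ c, g c * (if c = k then u else if c = l then v else 0)) = g k * u + g l * v := by
    intro g u v
    have : ∀ c, g c * (if c = k then u else if c = l then v else 0)
        = (if c = k then g c * u else 0) + (if c = l then g c * v else 0) := by
      intro c
      by_cases h1 : c = k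
      · subst h1; simp [hkl']
      · by_cases h2 : c = l <;> simp [h1, h2, Ne.symm hkl']
    rw [Finset.sum_congr rfl fun c _ => this c, Finset.sum_add_distrib,
      Finset.sum_ite_eq' univ k, Finset.sum_ite_eq' univ l]
    simp
  have hsurj : Function.Surjective f := by
    rintro ⟨x, y⟩
    set x' : ZMod m := ((x.val : ℕ) : ZMod m) with hx'
    set y' : ZMod m := ((y.val : ℕ) : ZMod m) with hy'
    set u : ZMod m := (s : ZMod m) * ((A j l : ZMod m) * x' - (A i l : ZMod m) * y') with hu
    set v : ZMod m := (s : ZMod m) * ((A i k : ZMod m) * y' - (A j k : ZMod m) * x') with hv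
    refine ⟨fun c => if c = k then u else if c = l then v else 0, ?_⟩
    have e1 : (∑ c, (A i c : ZMod m) * (if c = k then u else if c = l then v else 0)) = x' := by
      rw [hsum]
      rw [hu, hv]
      linear_combination x' * hs
    have e2 : (∑ c, (A j c : ZMod m) * (if c = k then u else if c = l then v else 0)) = y' := by
      rw [hsum, hu, hv]
      linear_combination y' * hs
    show (φi _, φj _) = (x, y)
    rw [e1, e2, hx', hy']
    simp [φi, φj, ZMod.natCast_val, ZMod.cast_id]
  set c0 : ZMod (p ^ a i) × ZMod (p ^ a j) :=
    (-((b i : ℤ) : ZMod (p ^ a i)), -((b j : ℤ) : ZMod (p ^ a j))) with hc0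
  have hinj : ((Fintype.piFinset fun _ : Fin d => Finset.range m).filter
        fun n => ∀ i', ((p ^ a i' : ℕ) : ℤ) ∣ psiZ A b i' fun c => (n c : ℤ)).card
      ≤ ((univ : Finset (Fin d → ZMod m)).filter fun g => f g = c0).card := by
    apply Finset.card_le_card_of_injOn (fun n c => ((n c : ℕ) : ZMod m))
    · intro n hn
      simp only [Finset.mem_coe, Finset.mem_filter, Fintype.mem_piFinset, Finset.mem_range] at hn
      obtain ⟨hn1, hn2⟩ := hn
      simp only [Finset.mem_coe, Finset.mem_filter, Finset.mem_univ, true_and]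
      have key : ∀ (i' : Fin t) (h' : a i' ≤ M),
          (ZMod.castHom (pow_dvd_pow p h') (ZMod (p ^ a i')) : ZMod m →+* ZMod (p ^ a i'))
            (∑ c, (A i' c : ZMod m) * ((n c : ℕ) : ZMod m))
          = -((b i' : ℤ) : ZMod (p ^ a i')) := by
        intro i' h'
        have hd : ((∑ c, A i' c * (n c : ℤ) + b i' : ℤ) : ZMod (p ^ a i')) = 0 :=
          (ZMod.intCast_zmod_eq_zero_iff_dvd _ _).mpr (by exact_mod_cast hn2 i')
        push_cast at hd
        rw [map_sum]
        simp only [map_mul, map_intCast, map_natCast]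
        exact eq_neg_of_add_eq_zero_left hd
      exact Prod.ext (key i hai) (key j haj)
    · intro n hn n' hn' h
      simp only [Finset.mem_coe, Finset.mem_filter, Fintype.mem_piFinset,
        Finset.mem_range] at hn hn'
      funext c
      have h1 : ((n c : ℕ) : ZMod m).val = n c := ZMod.val_natCast_of_lt (hn.1 c)
      have h2 : ((n' c : ℕ) : ZMod m).val = n' c := ZMod.val_natCast_of_lt (hn'.1 c)
      have hv : ((n c : ℕ) : ZMod m).val = ((n' c : ℕ) : ZMod m).val :=
        congrArg ZMod.val (congrFun h c)
      rwa [h1, h2] at hv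
  have hfib := fiber_card_mul f hsurj c0
  have hH : Fintype.card (ZMod (p ^ a i) × ZMod (p ^ a j)) = p ^ (a i + a j) := by
    rw [Fintype.card_prod, ZMod.card, ZMod.card, pow_add]
  have hG : Fintype.card (Fin d → ZMod m) = m ^ d := by
    rw [Fintype.card_fun, ZMod.card, Fintype.card_fin]
  calc ((Fintype.piFinset fun _ : Fin d => Finset.range m).filter
        fun n => ∀ i', ((p ^ a i' : ℕ) : ℤ) ∣ psiZ A b i' fun c => (n c : ℤ)).card
      * (p ^ (a i + a j))
      ≤ ((univ : Finset (Fin d → ZMod m)).filter fun g => f g = c0).card * p ^ (a i + a j) :=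
        Nat.mul_le_mul_right _ hinj
    _ = Fintype.card (Fin d → ZMod m) := by rw [← hH]; exact hfib
    _ = m ^ d := hG

lemma exists_minor {d : ℕ} (p : ℕ) (hp : p.Prime) (u v : Fin d → ℤ)
    (h : ¬AffRelMod p u v) :
    ∃ k l : Fin d, ¬ (p : ℤ) ∣ (u k * v l - u l * v k) := by
  have hpz : Prime ((p : ℕ) : ℤ) := Int.prime_iff_natAbs_prime.mpr (by simpa using hp)
  by_contra hc
  push_neg at hc
  apply h
  by_cases h0 : ∀ k, (p : ℤ) ∣ u k
  · exact ⟨1, 0, Or.inl hpz.not_dvd_one, fun k => by simpa using h0 k⟩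
  · push_neg at h0
    obtain ⟨k0, hk0⟩ := h0
    refine ⟨v k0, -u k0, Or.inr (by simpa using hk0), fun k => ?_⟩
    have h2 : v k0 * u k + (-u k0) * v k = -(u k0 * v k - u k * v k0) := by ring
    rw [h2]
    exact dvd_neg.mpr (hc k0 k)

lemma lcm_pow (t : ℕ) (ht : 0 < t) (p : ℕ) (a : Fin t → ℕ) :
    (univ : Finset (Fin t)).lcm (fun k => p ^ a k) = p ^ (univ : Finset (Fin t)).sup a := by
  haveI : Nonempty (Fin t) := Fin.pos_iff_nonempty.mp ht
  obtain ⟨k0, -, hk0⟩ := Finset.exists_mem_eq_sup univ univ_nonempty a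
  refine Nat.dvd_antisymm
    (Finset.lcm_dvd fun k _ => pow_dvd_pow p (Finset.le_sup (mem_univ k))) ?_
  rw [hk0]
  exact Finset.dvd_lcm (mem_univ k0)

lemma alphaD_le_aux (d t : ℕ) (ht : 0 < t) (A : Fin t → Fin d → ℤ) (b : Fin t → ℤ)
    (p : ℕ) (hp : p.Prime) (a : Fin t → ℕ) (i j : Fin t)
    (k l : Fin d) (hkl : ¬ (p : ℤ) ∣ (A i k * A j l - A i l * A j k)) :
    alphaD A b (fun k => p ^ a k) ≤ ((p : ℝ) ^ (a i + a j))⁻¹ := by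
  have hai : a i ≤ (univ : Finset (Fin t)).sup a := Finset.le_sup (mem_univ i)
  have haj : a j ≤ (univ : Finset (Fin t)).sup a := Finset.le_sup (mem_univ j)
  have hc := count_le d t ((univ : Finset (Fin t)).sup a) A b p hp a i j hai haj k l hkl
  have hL : (univ : Finset (Fin t)).lcm (fun k => p ^ a k)
      = p ^ (univ : Finset (Fin t)).sup a := lcm_pow t ht p a
  unfold alphaD
  rw [hL]
  have hp0 : (0 : ℝ) < (p : ℝ) := by exact_mod_cast hp.pos
  have hX : (0 : ℝ) < (((p ^ (univ : Finset (Fin t)).sup a : ℕ)) : ℝ) ^ d := by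
    have : 0 < p ^ (univ : Finset (Fin t)).sup a := pow_pos hp.pos _
    positivity
  rw [div_le_iff₀ hX, inv_mul_eq_div, le_div_iff₀ (by positivity)]
  exact_mod_cast hc

/-- **Bounds on local divisor densities at prime powers.**
(a) If `i ≠ j`, `a_i, a_j ≥ 1` and `ψ_i, ψ_j` are not affinely related mod `p`,
then `α(p^{a_1},…,p^{a_t}) ≤ p^{-a_i-a_j}`.
(b) If `p` is unexceptional and at least two exponents are nonzero, then
`α(p^{a_1},…,p^{a_t}) ≤ p^{-(max_k a_k)-1}`. -/
theorem alphaD_prime_power_bounds (d t : ℕ) (hd : 0 < d) (ht : 0 < t)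
    (A : Fin t → Fin d → ℤ) (b : Fin t → ℤ) (hsys : IsSystem A b)
    (p : ℕ) (hp : p.Prime) (a : Fin t → ℕ) :
    (∀ i j : Fin t, i ≠ j → 1 ≤ a i → 1 ≤ a j → ¬AffRelMod p (A i) (A j) →
        alphaD A b (fun k => p ^ a k) ≤ ((p : ℝ) ^ (a i + a j))⁻¹) ∧
    (¬Exceptional A p → (∃ i j : Fin t, i ≠ j ∧ a i ≠ 0 ∧ a j ≠ 0) →
        alphaD A b (fun k => p ^ a k) ≤
          ((p : ℝ) ^ ((univ : Finset (Fin t)).sup a + 1))⁻¹) := by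
  haveI : Nonempty (Fin t) := Fin.pos_iff_nonempty.mp ht
  have parta : ∀ i j : Fin t, i ≠ j → 1 ≤ a i → 1 ≤ a j → ¬AffRelMod p (A i) (A j) →
      alphaD A b (fun k => p ^ a k) ≤ ((p : ℝ) ^ (a i + a j))⁻¹ := by
    intro i j hij hai haj hrel
    obtain ⟨k, l, hkl⟩ := exists_minor p hp (A i) (A j) hrel
    exact alphaD_le_aux d t ht A b p hp a i j k l hkl
  refine ⟨fun i j hij hai haj hrel => parta i j hij hai haj hrel, ?_⟩
  rintro hnex ⟨i, j, hij, hai, haj⟩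
  obtain ⟨k0, -, hk0⟩ := Finset.exists_mem_eq_sup (univ : Finset (Fin t)) univ_nonempty a
  obtain ⟨j', hne, haj'⟩ : ∃ j', k0 ≠ j' ∧ 1 ≤ a j' := by
    by_cases h : k0 = i
    · exact ⟨j, h ▸ hij, Nat.one_le_iff_ne_zero.mpr haj⟩
    · exact ⟨i, h, Nat.one_le_iff_ne_zero.mpr hai⟩
  have hrel : ¬AffRelMod p (A k0) (A j') := fun h => hnex ⟨k0, j', hne, h⟩
  have hak0 : 1 ≤ a k0 :=
    le_trans (Nat.one_le_iff_ne_zero.mpr hai) (hk0 ▸ Finset.le_sup (mem_univ i))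
  have h1 := parta k0 j' hne hak0 haj' hrel
  refine h1.trans ?_
  have hp0 : (0 : ℝ) < (p : ℝ) := by exact_mod_cast hp.pos
  have hexp : (univ : Finset (Fin t)).sup a + 1 ≤ a k0 + a j' := by
    omega
  apply inv_anti₀ (by positivity)
  exact pow_le_pow_right₀ (by exact_mod_cast hp.one_lt.le) hexp

end DivisorCorr
end
end

section
/- k-th moment bound for the divisor function along affine-linear forms. Let k, t, m, L be positive integers, let N ≥ 2, let Ψ = (ψ_1, …, ψ_t) : ℤ^m → ℤ^t be a system of affine-linear forms whose linear coefficients are bounded in absolute value by L, and let K ⊆ [−N, N]^m be a convex set with Ψ(K) ⊆ [1, N]^t. Then Σ_{n ∈ ℤ^m ∩ K} ∏_{i=1}^t τ(ψ_i(n))^k ≪_{k,t,m,L} N^m (log N)^{2^{tk} − 1}. -/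
open MeasureTheory Finset Filter
open scoped Classical BigOperators

noncomputable section

namespace DivisorCorr

lemma sum_le_sum_inj {α β : Type*} [DecidableEq β] (s : Finset α) (t : Finset β)
    (Φ : α → β) (f : α → ℝ) (g : β → ℝ)
    (hinj : ∀ a ∈ s, ∀ a' ∈ s, Φ a = Φ a' → a = a') (hmaps : ∀ a ∈ s, Φ a ∈ t)
    (hle : ∀ a ∈ s, f a ≤ g (Φ a)) (hg : ∀ b ∈ t, 0 ≤ g b) :
    ∑ a ∈ s, f a ≤ ∑ b ∈ t, g b := by
  calc ∑ a ∈ s, f a ≤ ∑ a ∈ s, g (Φ a) := Finset.sum_le_sum hle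
    _ = ∑ b ∈ s.image Φ, g b := (Finset.sum_image hinj).symm
    _ ≤ ∑ b ∈ t, g b := Finset.sum_le_sum_of_subset_of_nonneg
        (Finset.image_subset_iff.mpr hmaps) (fun b hb _ => hg b hb)

lemma card_divisors_mul_le (e f : ℕ) (he : e ≠ 0) (hf : f ≠ 0) :
    (e * f).divisors.card ≤ e.divisors.card * f.divisors.card := by
  rw [← Finset.card_product]
  apply Finset.card_le_card_of_injOn (fun d => (Nat.gcd d e, d / Nat.gcd d e))
  · intro d hd
    rw [Finset.mem_coe, Nat.mem_divisors] at hd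
    obtain ⟨hdvd, hne⟩ := hd
    have hd0 : d ≠ 0 := by rintro rfl; exact hne (zero_dvd_iff.mp hdvd)
    have hg0 : 0 < Nat.gcd d e := Nat.gcd_pos_of_pos_left e (Nat.pos_of_ne_zero hd0)
    have hge : Nat.gcd d e ∣ e := Nat.gcd_dvd_right d e
    have hdg : Nat.gcd d e ∣ d := Nat.gcd_dvd_left d e
    have hcop : Nat.Coprime (d / Nat.gcd d e) (e / Nat.gcd d e) :=
      Nat.coprime_div_gcd_div_gcd hg0
    have hdvd2 : d / Nat.gcd d e ∣ (e / Nat.gcd d e) * f := by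
      have h1 : Nat.gcd d e * (d / Nat.gcd d e) ∣ Nat.gcd d e * ((e / Nat.gcd d e) * f) := by
        rw [Nat.mul_div_cancel' hdg, ← mul_assoc, Nat.mul_div_cancel' hge]
        exact hdvd
      exact (mul_dvd_mul_iff_left hg0.ne').mp h1
    have hdf : d / Nat.gcd d e ∣ f := Nat.Coprime.dvd_of_dvd_mul_left hcop hdvd2
    exact Finset.mem_product.mpr ⟨Nat.mem_divisors.mpr ⟨hge, he⟩,
      Nat.mem_divisors.mpr ⟨hdf, hf⟩⟩
  · intro d1 h1 d2 h2 hpair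
    have e1 : Nat.gcd d1 e = Nat.gcd d2 e := congrArg Prod.fst hpair
    have e2 : d1 / Nat.gcd d1 e = d2 / Nat.gcd d2 e := congrArg Prod.snd hpair
    calc d1 = Nat.gcd d1 e * (d1 / Nat.gcd d1 e) := (Nat.mul_div_cancel' (Nat.gcd_dvd_left d1 e)).symm
      _ = Nat.gcd d2 e * (d2 / Nat.gcd d2 e) := by rw [e2, e1]
      _ = d2 := Nat.mul_div_cancel' (Nat.gcd_dvd_left d2 e)

lemma Tsum (K : ℕ) : ∀ M : ℕ,
    ∑ d ∈ Icc 1 M, ((d.divisors.card : ℝ)) ^ K / d ≤ (1 + Real.log M) ^ (2 ^ K) := by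
  induction K with
  | zero =>
    intro M
    simp only [pow_zero, pow_one]
    have h := harmonic_le_one_add_log M
    have heq : (harmonic M : ℝ) = ∑ d ∈ Icc 1 M, (1:ℝ) / d := by
      rw [harmonic_eq_sum_Icc]; push_cast; simp [one_div]
    linarith [heq ▸ h]
  | succ K ih =>
    intro M
    have hlog : (0:ℝ) ≤ 1 + Real.log M := by
      rcases Nat.eq_zero_or_pos M with h | h
      · simp [h]
      · have : (0:ℝ) ≤ Real.log M := Real.log_natCast_nonneg M
        linarith
    have step1 : ∑ d ∈ Icc 1 M, ((d.divisors.card : ℝ)) ^ (K+1) / d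
        = ∑ p ∈ (Icc 1 M).sigma (fun d => d.divisors),
            ((p.1.divisors.card : ℝ)) ^ K / p.1 := by
      rw [Finset.sum_sigma]
      refine Finset.sum_congr rfl (fun d hd => ?_)
      show _ = ∑ _e ∈ d.divisors, ((d.divisors.card : ℝ)) ^ K / d
      rw [Finset.sum_const, nsmul_eq_mul, pow_succ]
      ring
    rw [step1]
    have step2 : ∑ p ∈ (Icc 1 M).sigma (fun d => d.divisors),
            ((p.1.divisors.card : ℝ)) ^ K / p.1
        ≤ ∑ q ∈ (Icc 1 M) ×ˢ (Icc 1 M),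
            (((q.1.divisors.card : ℝ)) ^ K / q.1) * (((q.2.divisors.card : ℝ)) ^ K / q.2) := by
      apply sum_le_sum_inj _ _ (fun p => (p.2, p.1 / p.2))
      · intro p hp p' hp' hpair
        rw [Finset.mem_sigma] at hp hp'
        have e1 : p.2 = p'.2 := congrArg Prod.fst hpair
        have e2 : p.1 / p.2 = p'.1 / p'.2 := congrArg Prod.snd hpair
        have r1 : p.1 = p.2 * (p.1 / p.2) := (Nat.mul_div_cancel' (Nat.mem_divisors.mp hp.2).1).symm
        have r2 : p'.1 = p'.2 * (p'.1 / p'.2) := (Nat.mul_div_cancel' (Nat.mem_divisors.mp hp'.2).1).symm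
        have hfst : p.1 = p'.1 := by rw [r1, r2, e2, e1]
        obtain ⟨a, b⟩ := p; obtain ⟨a', b'⟩ := p'
        simp only at hfst e1
        subst hfst; subst e1; rfl
      · rintro ⟨d, e⟩ hp
        simp only [Finset.mem_sigma, Finset.mem_Icc, Nat.mem_divisors] at hp
        obtain ⟨⟨hd1, hdM⟩, hdvd, hdne⟩ := hp
        have he1 : 1 ≤ e := Nat.pos_of_ne_zero (by rintro rfl; exact hdne (zero_dvd_iff.mp hdvd))
        have hf : d / e ∣ d := Nat.div_dvd_of_dvd hdvd
        have hf0 : d / e ≠ 0 := fun h => hdne (by rw [← Nat.mul_div_cancel' hdvd, h, mul_zero])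
        exact Finset.mem_product.mpr
          ⟨Finset.mem_Icc.mpr ⟨he1, le_trans (Nat.le_of_dvd hd1 hdvd) hdM⟩,
           Finset.mem_Icc.mpr ⟨Nat.pos_of_ne_zero hf0, le_trans (Nat.le_of_dvd hd1 hf) hdM⟩⟩
      · rintro ⟨d, e⟩ hp
        simp only [Finset.mem_sigma, Finset.mem_Icc, Nat.mem_divisors] at hp
        obtain ⟨⟨hd1, hdM⟩, hdvd, hdne⟩ := hp
        have he0 : e ≠ 0 := by rintro rfl; exact hdne (zero_dvd_iff.mp hdvd)
        have hf0 : d / e ≠ 0 := fun h => hdne (by rw [← Nat.mul_div_cancel' hdvd, h, mul_zero])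
        have hmul : e * (d / e) = d := Nat.mul_div_cancel' hdvd
        have htau : (d.divisors.card : ℝ) ≤ (e.divisors.card : ℝ) * ((d/e).divisors.card : ℝ) := by
          calc (d.divisors.card : ℝ) = ((e * (d/e)).divisors.card : ℝ) := by rw [hmul]
            _ ≤ _ := by exact_mod_cast card_divisors_mul_le e (d/e) he0 hf0
        show ((d.divisors.card : ℝ)) ^ K / (d:ℝ) ≤
          (((e.divisors.card : ℝ)) ^ K / (e:ℝ)) *
            ((((d/e).divisors.card : ℝ)) ^ K / ((d/e : ℕ) : ℝ))
        have hden : (e:ℝ) * ((d/e : ℕ) : ℝ) = (d:ℝ) := by rw [← Nat.cast_mul, hmul]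
        rw [div_mul_div_comm, ← mul_pow, hden]
        gcongr
      · rintro ⟨a, b⟩ _
        positivity
    refine step2.trans ?_
    rw [Finset.sum_product]
    dsimp only
    rw [← Finset.sum_mul_sum]
    calc (∑ e ∈ Icc 1 M, ((e.divisors.card : ℝ)) ^ K / e) *
          (∑ f ∈ Icc 1 M, ((f.divisors.card : ℝ)) ^ K / f)
        ≤ (1 + Real.log M) ^ (2^K) * (1 + Real.log M) ^ (2^K) := by
          apply mul_le_mul (ih M) (ih M) (by positivity) (by positivity)
      _ = (1 + Real.log M) ^ (2^(K+1)) := by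
          rw [← pow_add]; congr 1; rw [pow_succ]; omega
    


lemma Ssum (K : ℕ) : ∀ N : ℕ,
    ∑ n ∈ Icc 1 N, ((n.divisors.card : ℝ)) ^ K ≤ N * (1 + Real.log N) ^ (2 ^ K - 1) := by
  induction K with
  | zero => intro N; simp [Nat.card_Icc]
  | succ K ih =>
    intro N
    rcases Nat.eq_zero_or_pos N with rfl | hN
    · simp
    have hlogN : (0:ℝ) ≤ Real.log N := Real.log_natCast_nonneg N
    have hlog : (0:ℝ) ≤ 1 + Real.log N := by linarith
    have step1 : ∑ n ∈ Icc 1 N, ((n.divisors.card : ℝ)) ^ (K+1)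
        = ∑ p ∈ (Icc 1 N).sigma (fun d => d.divisors), ((p.1.divisors.card : ℝ)) ^ K := by
      rw [Finset.sum_sigma]
      refine Finset.sum_congr rfl (fun d hd => ?_)
      show _ = ∑ _e ∈ d.divisors, ((d.divisors.card : ℝ)) ^ K
      rw [Finset.sum_const, nsmul_eq_mul, pow_succ]
      ring
    rw [step1]
    have step2 : ∑ p ∈ (Icc 1 N).sigma (fun d => d.divisors), ((p.1.divisors.card : ℝ)) ^ K
        ≤ ∑ q ∈ (Icc 1 N).sigma (fun e => Icc 1 (N / e)),
            ((q.1.divisors.card : ℝ)) ^ K * ((q.2.divisors.card : ℝ)) ^ K := by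
      apply sum_le_sum_inj _ _ (fun p => ⟨p.2, p.1 / p.2⟩)
      · intro p hp p' hp' hpair
        rw [Finset.mem_sigma] at hp hp'
        have e1 : p.2 = p'.2 := congrArg Sigma.fst hpair
        have e2 : p.1 / p.2 = p'.1 / p'.2 := by
          have := congrArg Sigma.snd hpair
          simpa using this
        have r1 : p.1 = p.2 * (p.1 / p.2) := (Nat.mul_div_cancel' (Nat.mem_divisors.mp hp.2).1).symm
        have r2 : p'.1 = p'.2 * (p'.1 / p'.2) := (Nat.mul_div_cancel' (Nat.mem_divisors.mp hp'.2).1).symm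
        have hfst : p.1 = p'.1 := by rw [r1, r2, e2, e1]
        obtain ⟨a, b⟩ := p; obtain ⟨a', b'⟩ := p'
        simp only at hfst e1
        subst hfst; subst e1; rfl
      · rintro ⟨d, e⟩ hp
        simp only [Finset.mem_sigma, Finset.mem_Icc, Nat.mem_divisors] at hp
        obtain ⟨⟨hd1, hdN⟩, hdvd, hdne⟩ := hp
        have he1 : 1 ≤ e := Nat.pos_of_ne_zero (by rintro rfl; exact hdne (zero_dvd_iff.mp hdvd))
        have hf0 : d / e ≠ 0 := fun h => hdne (by rw [← Nat.mul_div_cancel' hdvd, h, mul_zero])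
        exact Finset.mem_sigma.mpr
          ⟨Finset.mem_Icc.mpr ⟨he1, le_trans (Nat.le_of_dvd hd1 hdvd) hdN⟩,
           Finset.mem_Icc.mpr ⟨Nat.pos_of_ne_zero hf0, Nat.div_le_div_right hdN⟩⟩
      · rintro ⟨d, e⟩ hp
        simp only [Finset.mem_sigma, Finset.mem_Icc, Nat.mem_divisors] at hp
        obtain ⟨⟨hd1, hdN⟩, hdvd, hdne⟩ := hp
        have he0 : e ≠ 0 := by rintro rfl; exact hdne (zero_dvd_iff.mp hdvd)
        have hf0 : d / e ≠ 0 := fun h => hdne (by rw [← Nat.mul_div_cancel' hdvd, h, mul_zero])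
        have hmul : e * (d / e) = d := Nat.mul_div_cancel' hdvd
        have htau : (d.divisors.card : ℝ) ≤ (e.divisors.card : ℝ) * ((d/e).divisors.card : ℝ) := by
          calc (d.divisors.card : ℝ) = ((e * (d/e)).divisors.card : ℝ) := by rw [hmul]
            _ ≤ _ := by exact_mod_cast card_divisors_mul_le e (d/e) he0 hf0
        show ((d.divisors.card : ℝ)) ^ K ≤
            ((e.divisors.card : ℝ)) ^ K * (((d/e).divisors.card : ℝ)) ^ K
        rw [← mul_pow]
        gcongr
      · rintro ⟨a, b⟩ _
        positivity
    refine step2.trans ?_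
    rw [Finset.sum_sigma]
    have inner : ∀ e ∈ Icc 1 N,
        ∑ f ∈ Icc 1 (N / e), ((e.divisors.card : ℝ)) ^ K * ((f.divisors.card : ℝ)) ^ K
          ≤ ((e.divisors.card : ℝ)) ^ K / e * ((N : ℝ) * (1 + Real.log N) ^ (2 ^ K - 1)) := by
      intro e he
      rw [Finset.mem_Icc] at he
      have he1 : (1:ℝ) ≤ (e:ℝ) := by exact_mod_cast he.1
      have he0 : (0:ℝ) < (e:ℝ) := by linarith
      rw [← Finset.mul_sum]
      have h1 : ∑ f ∈ Icc 1 (N / e), ((f.divisors.card : ℝ)) ^ K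
          ≤ (N / e : ℕ) * (1 + Real.log (N / e : ℕ)) ^ (2 ^ K - 1) := ih (N / e)
      have h2 : ((N / e : ℕ) : ℝ) ≤ (N : ℝ) / e := Nat.cast_div_le
      have h3 : Real.log ((N / e : ℕ) : ℝ) ≤ Real.log N := by
        rcases Nat.eq_zero_or_pos (N / e) with h | h
        · rw [h]; simpa using hlogN
        · exact Real.log_le_log (by exact_mod_cast h)
            (by exact_mod_cast Nat.div_le_self N e)
      have h4 : (1 + Real.log ((N / e : ℕ) : ℝ)) ^ (2 ^ K - 1)
          ≤ (1 + Real.log N) ^ (2 ^ K - 1) := by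
        apply pow_le_pow_left₀ ?_ (by linarith)
        rcases Nat.eq_zero_or_pos (N / e) with h | h
        · rw [h]; norm_num
        · have : (0:ℝ) ≤ Real.log ((N/e : ℕ) : ℝ) := Real.log_natCast_nonneg _
          linarith
      have h5 : ∑ f ∈ Icc 1 (N / e), ((f.divisors.card : ℝ)) ^ K
          ≤ (N : ℝ) / e * (1 + Real.log N) ^ (2 ^ K - 1) := by
        refine h1.trans ?_
        apply mul_le_mul h2 h4 (by positivity) (by positivity)
      calc ((e.divisors.card : ℝ)) ^ K * ∑ f ∈ Icc 1 (N / e), ((f.divisors.card : ℝ)) ^ K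
          ≤ ((e.divisors.card : ℝ)) ^ K * ((N : ℝ) / e * (1 + Real.log N) ^ (2 ^ K - 1)) := by
            apply mul_le_mul_of_nonneg_left h5 (by positivity)
        _ = ((e.divisors.card : ℝ)) ^ K / e * ((N : ℝ) * (1 + Real.log N) ^ (2 ^ K - 1)) := by
            field_simp
    calc ∑ e ∈ Icc 1 N, ∑ f ∈ Icc 1 (N / e),
          ((e.divisors.card : ℝ)) ^ K * ((f.divisors.card : ℝ)) ^ K
        ≤ ∑ e ∈ Icc 1 N, ((e.divisors.card : ℝ)) ^ K / e *
            ((N : ℝ) * (1 + Real.log N) ^ (2 ^ K - 1)) := Finset.sum_le_sum inner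
      _ = (∑ e ∈ Icc 1 N, ((e.divisors.card : ℝ)) ^ K / e) *
            ((N : ℝ) * (1 + Real.log N) ^ (2 ^ K - 1)) := by rw [Finset.sum_mul]
      _ ≤ (1 + Real.log N) ^ (2 ^ K) * ((N : ℝ) * (1 + Real.log N) ^ (2 ^ K - 1)) := by
          apply mul_le_mul_of_nonneg_right (Tsum K N) (by positivity)
      _ = (N : ℝ) * (1 + Real.log N) ^ (2 ^ (K + 1) - 1) := by
          rw [← mul_assoc, mul_comm ((1 + Real.log (N:ℝ)) ^ (2 ^ K)) (N:ℝ), mul_assoc, ← pow_add]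
          congr 2
          have h1 : 1 ≤ 2 ^ K := Nat.one_le_two_pow
          rw [pow_succ]
          omega


lemma prod_pow_le_sum {t : ℕ} (ht : 0 < t) (k : ℕ) (x : Fin t → ℝ) (hx : ∀ i, 0 ≤ x i) :
    ∏ i, x i ^ k ≤ ∑ i, x i ^ (t * k) := by
  have hne : (univ : Finset (Fin t)).Nonempty := by
    simpa [Finset.univ_nonempty_iff] using Fin.pos_iff_nonempty.mp ht
  obtain ⟨i0, -, hmax⟩ := Finset.exists_max_image univ x hne
  calc ∏ i, x i ^ k ≤ ∏ _i : Fin t, x i0 ^ k :=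
        Finset.prod_le_prod (fun i _ => pow_nonneg (hx i) k)
          (fun i _ => pow_le_pow_left₀ (hx i) (hmax i (mem_univ i)) k)
    _ = x i0 ^ (t * k) := by
        rw [Finset.prod_const, card_univ, Fintype.card_fin, ← pow_mul, mul_comm k t]
    _ ≤ ∑ i, x i ^ (t * k) :=
        Finset.single_le_sum (f := fun i => x i ^ (t * k))
          (fun i _ => pow_nonneg (hx i) _) (mem_univ i0)

lemma psiZ_cast {d t : ℕ} (A : Fin t → Fin d → ℤ) (b : Fin t → ℤ) (i : Fin t)
    (n : Fin d → ℤ) : ((psiZ A b i n : ℤ) : ℝ) = psiR A b i (fun j => (n j : ℝ)) := by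
  simp only [psiZ, psiR]
  push_cast
  ring

lemma sum_int_tau (N E : ℕ) :
    ∑ x ∈ Finset.Icc (1 : ℤ) (N : ℤ), ((x.natAbs.divisors.card : ℝ)) ^ E
      = ∑ v ∈ Finset.Icc 1 N, ((v.divisors.card : ℝ)) ^ E := by
  have himg : Finset.Icc (1 : ℤ) (N : ℤ) = (Finset.Icc 1 N).image (fun v : ℕ => (v : ℤ)) := by
    ext x
    simp only [Finset.mem_Icc, Finset.mem_image]
    constructor
    · intro h
      exact ⟨x.toNat, by omega, by omega⟩
    · rintro ⟨v, hv, rfl⟩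
      omega
  rw [himg, Finset.sum_image (by intro a _ c _ h; exact Nat.cast_injective h)]
  refine Finset.sum_congr rfl (fun v _ => ?_)
  simp

lemma per_form {m t : ℕ} (N : ℕ) (A : Fin t → Fin m → ℤ) (b : Fin t → ℤ) (i : Fin t)
    (j0 : Fin m) (hj0 : A i j0 ≠ 0) (K : Set (Fin m → ℝ)) (hmaps : MapsIn A b N K) (E : ℕ) :
    ∑ n ∈ pts m N K, ((tauZ (psiZ A b i n)) : ℝ) ^ E ≤
      ((Finset.Icc (-(N : ℤ)) (N : ℤ)).card : ℝ) ^ (m - 1) *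
        ∑ v ∈ Finset.Icc 1 N, ((v.divisors.card : ℝ)) ^ E := by
  classical
  set s : Fin m → Finset ℤ :=
    fun j => if j = j0 then Finset.Icc (1 : ℤ) (N : ℤ) else Finset.Icc (-(N : ℤ)) (N : ℤ) with hs
  have hsj0 : s j0 = Finset.Icc (1 : ℤ) (N : ℤ) := by rw [hs]; simp
  have hsne : ∀ j, j ≠ j0 → s j = Finset.Icc (-(N : ℤ)) (N : ℤ) := by
    intro j hj; rw [hs]; simp [hj]
  have key : ∑ n ∈ pts m N K, ((tauZ (psiZ A b i n)) : ℝ) ^ E ≤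
      ∑ y ∈ Fintype.piFinset s, (((y j0).natAbs.divisors.card : ℝ)) ^ E := by
    apply sum_le_sum_inj _ _ (fun n => Function.update n j0 (psiZ A b i n))
    · intro n hn n' hn' heq
      have hoth : ∀ j, j ≠ j0 → n j = n' j := by
        intro j hj
        have := congrFun heq j
        simpa [Function.update_of_ne hj] using this
      have hpsi : psiZ A b i n = psiZ A b i n' := by
        have := congrFun heq j0
        simpa [Function.update_self] using this
      have hsum : ∑ j, A i j * (n j - n' j) = 0 := by
        have h1 : ∑ j, A i j * n j = ∑ j, A i j * n' j := by
          have := hpsi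
          simp only [psiZ] at this
          omega
        calc ∑ j, A i j * (n j - n' j) = ∑ j, A i j * n j - ∑ j, A i j * n' j := by
              rw [← Finset.sum_sub_distrib]
              exact Finset.sum_congr rfl (fun j _ => by ring)
          _ = 0 := by rw [h1, sub_self]
      have hsingle : ∑ j, A i j * (n j - n' j) = A i j0 * (n j0 - n' j0) := by
        apply Finset.sum_eq_single_of_mem j0 (mem_univ j0)
        intro j _ hj
        rw [hoth j hj, sub_self, mul_zero]
      have hz : A i j0 * (n j0 - n' j0) = 0 := by rw [← hsingle, hsum]
      have hj : n j0 = n' j0 := by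
        rcases mul_eq_zero.mp hz with h | h
        · exact absurd h hj0
        · omega
      funext j
      by_cases h : j = j0
      · subst h; exact hj
      · exact hoth j h
    · intro n hn
      simp only [pts, Finset.mem_filter, Fintype.mem_piFinset] at hn
      obtain ⟨hbox, hK⟩ := hn
      rw [Fintype.mem_piFinset]
      intro j
      by_cases h : j = j0
      · subst h
        rw [Function.update_self, hsj0]
        have hpsi := hmaps _ hK i
        rw [Set.mem_Icc] at hpsi
        rw [← psiZ_cast] at hpsi
        rw [Finset.mem_Icc]
        exact ⟨by exact_mod_cast hpsi.1, by exact_mod_cast hpsi.2⟩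
      · rw [Function.update_of_ne h, hsne j h]
        exact hbox j
    · intro n _
      rw [Function.update_self]
      rfl
    · intro y _
      positivity
  refine key.trans ?_
  have expand : ∑ y ∈ Fintype.piFinset s, (((y j0).natAbs.divisors.card : ℝ)) ^ E
      = ∏ j, ∑ x ∈ s j, (if j = j0 then ((x.natAbs.divisors.card : ℝ)) ^ E else 1) := by
    rw [Finset.prod_univ_sum]
    refine Finset.sum_congr rfl (fun y _ => ?_)
    rw [Finset.prod_eq_single_of_mem j0 (mem_univ j0)]
    · rw [if_pos rfl]
    · intro j _ hj
      rw [if_neg hj]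
  rw [expand]
  rw [Finset.prod_eq_mul_prod_sdiff_singleton_of_mem (mem_univ j0)]
  have h1 : ∑ x ∈ s j0, (if j0 = j0 then ((x.natAbs.divisors.card : ℝ)) ^ E else 1)
      = ∑ v ∈ Finset.Icc 1 N, ((v.divisors.card : ℝ)) ^ E := by
    simp only [if_pos rfl, hsj0]
    exact sum_int_tau N E
  have h2 : ∏ j ∈ univ \ {j0}, ∑ x ∈ s j, (if j = j0 then ((x.natAbs.divisors.card : ℝ)) ^ E else 1)
      = ((Finset.Icc (-(N : ℤ)) (N : ℤ)).card : ℝ) ^ (m - 1) := by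
    have : ∀ j ∈ univ \ {j0},
        (∑ x ∈ s j, (if j = j0 then ((x.natAbs.divisors.card : ℝ)) ^ E else 1))
          = ((Finset.Icc (-(N : ℤ)) (N : ℤ)).card : ℝ) := by
      intro j hj
      rw [Finset.mem_sdiff, Finset.mem_singleton] at hj
      rw [hsne j hj.2]
      simp only [if_neg hj.2, Finset.sum_const, nsmul_eq_mul, mul_one]
    rw [Finset.prod_congr rfl this, Finset.prod_const]
    congr 1
    rw [Finset.card_sdiff_of_subset (Finset.subset_univ _), Finset.card_singleton, card_univ,
      Fintype.card_fin]
  rw [h1, h2, mul_comm]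

set_option maxHeartbeats 1000000

/-- **k-th moment bound for the divisor function along affine-linear forms.**
`Σ_{n ∈ ℤ^m ∩ K} ∏_i τ(ψ_i(n))^k ≪_{k,t,m,L} N^m (log N)^{2^{tk}-1}`. -/
theorem kth_moment_bound (k t m L : ℕ) (hk : 0 < k) (ht : 0 < t) (hm : 0 < m) (hL : 0 < L) :
    ∃ C : ℝ, 0 < C ∧ ∀ N : ℕ, 2 ≤ N →
      ∀ (A : Fin t → Fin m → ℤ) (b : Fin t → ℤ), IsSystem A b → CoeffBound A L →
      ∀ K : Set (Fin m → ℝ), Convex ℝ K → InBox m N K → MapsIn A b N K →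
        (∑ n ∈ pts m N K, ∏ i, ((tauZ (psiZ A b i n) : ℝ)) ^ k) ≤
          C * (N : ℝ) ^ m * Real.log N ^ (2 ^ (t * k) - 1) := by
  have hlog2 : (0:ℝ) < Real.log 2 := Real.log_pos (by norm_num)
  refine ⟨(t : ℝ) * 3 ^ m * (1 + (Real.log 2)⁻¹) ^ (2 ^ (t * k) - 1), by positivity, ?_⟩
  intro N hN A b hsys hcoef K hconv hbox hmaps
  have hN1 : 1 ≤ N := le_trans (by norm_num) hN
  have hNR : (1:ℝ) ≤ (N:ℝ) := by exact_mod_cast hN1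
  have hlogN : Real.log 2 ≤ Real.log N := by
    apply Real.log_le_log (by norm_num)
    exact_mod_cast hN
  have hlogN0 : (0:ℝ) < Real.log N := lt_of_lt_of_le hlog2 hlogN
  set E := 2 ^ (t * k) - 1 with hEdef
  set c : ℝ := 1 + (Real.log 2)⁻¹ with hcdef
  have hc0 : (0:ℝ) < c := by positivity
  have h1c : 1 + Real.log N ≤ c * Real.log N := by
    have : (1:ℝ) ≤ (Real.log 2)⁻¹ * Real.log N := by
      rw [← div_eq_inv_mul, le_div_iff₀ hlog2]
      simpa using hlogN
    rw [hcdef]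
    ring_nf
    nlinarith [this]
  have hpowc : (1 + Real.log N) ^ E ≤ c ^ E * Real.log N ^ E := by
    rw [← mul_pow]
    exact pow_le_pow_left₀ (by positivity) h1c E
  have hW : ((Finset.Icc (-(N : ℤ)) (N : ℤ)).card : ℝ) ≤ 3 * N := by
    rw [Int.card_Icc]
    have h2 : ((N:ℤ) + 1 - (-(N:ℤ))).toNat = 2 * N + 1 := by omega
    rw [h2]
    push_cast
    have : (1:ℝ) ≤ (N:ℝ) := hNR
    linarith
  calc ∑ n ∈ pts m N K, ∏ i, ((tauZ (psiZ A b i n) : ℝ)) ^ k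
      ≤ ∑ n ∈ pts m N K, ∑ i, ((tauZ (psiZ A b i n) : ℝ)) ^ (t * k) :=
        Finset.sum_le_sum (fun n _ =>
          prod_pow_le_sum ht k (fun i => ((tauZ (psiZ A b i n) : ℝ)))
            (fun i => Nat.cast_nonneg _))
    _ = ∑ i, ∑ n ∈ pts m N K, ((tauZ (psiZ A b i n) : ℝ)) ^ (t * k) := Finset.sum_comm
    _ ≤ ∑ _i : Fin t, ((Finset.Icc (-(N : ℤ)) (N : ℤ)).card : ℝ) ^ (m - 1) *
          ∑ v ∈ Finset.Icc 1 N, ((v.divisors.card : ℝ)) ^ (t * k) := by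
        apply Finset.sum_le_sum
        intro i _
        obtain ⟨j0, hj0⟩ := hsys.1 i
        exact per_form N A b i j0 hj0 K hmaps (t * k)
    _ = (t : ℝ) * (((Finset.Icc (-(N : ℤ)) (N : ℤ)).card : ℝ) ^ (m - 1) *
          ∑ v ∈ Finset.Icc 1 N, ((v.divisors.card : ℝ)) ^ (t * k)) := by
        rw [Finset.sum_const, card_univ, Fintype.card_fin, nsmul_eq_mul]
    _ ≤ (t : ℝ) * ((3 * (N : ℝ)) ^ (m - 1) * ((N : ℝ) * (1 + Real.log N) ^ E)) := by
        apply mul_le_mul_of_nonneg_left ?_ (Nat.cast_nonneg t)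
        apply mul_le_mul
        · exact pow_le_pow_left₀ (Nat.cast_nonneg _) hW (m - 1)
        · rw [hEdef]
          exact Ssum (t * k) N
        · apply Finset.sum_nonneg
          intro v _
          positivity
        · positivity
    _ ≤ (t : ℝ) * ((3 * (N : ℝ)) ^ (m - 1) * ((N : ℝ) * (c ^ E * Real.log N ^ E))) := by
        gcongr
    _ = ((t : ℝ) * 3 ^ (m - 1) * c ^ E) * (((N : ℝ) ^ (m - 1) * (N : ℝ)) * Real.log N ^ E) := by
        rw [mul_pow]
        ring
    _ = ((t : ℝ) * 3 ^ (m - 1) * c ^ E) * ((N : ℝ) ^ m * Real.log N ^ E) := by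
        rw [← pow_succ, Nat.sub_add_cancel hm]
    _ ≤ ((t : ℝ) * 3 ^ m * c ^ E) * ((N : ℝ) ^ m * Real.log N ^ E) := by
        gcongr
        · norm_num
        · omega
    _ = (t : ℝ) * 3 ^ m * c ^ E * (N : ℝ) ^ m * Real.log N ^ E := by ring

end DivisorCorr
end
end
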